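/- arXiv:1806.00960 — 10 statements merged into one kernel-verified Lean document; each statement's English description precedes it below -/
import Mathlib

section
/- For any profile of agent locations x in [0,1]^n, any facility location s in [0,1], and any capacity k ≤ n, in every ex-post Nash equilibrium of the induced subgame the k agents closest to s (under the distance-based priority with deterministic tie-breaking) are served and attain utility 1 - |s - x_i|, while all other agents attain utility 0; moreover, such an equilibrium always exists. -/
open scoped Classical
open unitInterval

noncomputable section

/-- Distance-based priority: agent `i` has strictly higher priority than `j` for the
facility at `s` if `i` is strictly closer, or equidistant with a smaller index
(deterministic tie-breaking). -/
def prio {n : ℕ} (x : Fin n → I) (s : I) (i j : Fin n) : Prop :=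
  |(s : ℝ) - x i| < |(s : ℝ) - x j| ∨ (|(s : ℝ) - x i| = |(s : ℝ) - x j| ∧ i < j)

/-- Agent `i` is among the `k` closest agents to `s` (the set `N_k^*(x,s)`). -/
def served {n : ℕ} (x : Fin n → I) (s : I) (k : ℕ) (i : Fin n) : Prop :=
  ({j : Fin n | prio x s j i}).ncard < k

/-- Ex-post equilibrium utility `u_i^*(s, x, k)`. -/
def util {n : ℕ} (x : Fin n → I) (s : I) (k : ℕ) (i : Fin n) : ℝ :=
  if served x s k i then 1 - |(s : ℝ) - x i| else 0

/-- Ex-post dominant-strategy incentive compatibility for capacity `k`. -/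
def DIC (n k : ℕ) (M : (Fin n → I) → I) : Prop :=
  ∀ (i : Fin n) (x y : Fin n → I) (x' : I),
    util x (M (Function.update y i x')) k i ≤ util x (M (Function.update y i (x i))) k i

/-- The uncompromising property of a mechanism. -/
def Uncompromising {n : ℕ} (M : (Fin n → I) → I) : Prop :=
  ∀ (x : Fin n → I) (i : Fin n),
    ((M x : ℝ) < x i → ∀ x' : I, (M x : ℝ) ≤ x' → M (Function.update x i x') = M x) ∧
    ((x i : ℝ) < M x → ∀ x' : I, (x' : ℝ) ≤ M x → M (Function.update x i x') = M x)

/-- Generalized median mechanisms: `M(x) = min_S max(max_{i ∈ S} x_i, a_S)`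
(the max over the empty set being `0 = ⊥`). -/
def IsGMM {n : ℕ} (M : (Fin n → I) → I) : Prop :=
  ∃ a : Finset (Fin n) → I,
    ∀ x, M x = Finset.univ.inf fun S : Finset (Fin n) => max (S.sup x) (a S)

/-- Social welfare of facility location `s`. -/
def welfare {n : ℕ} (x : Fin n → I) (k : ℕ) (s : I) : ℝ :=
  ∑ i, util x s k i

/-- Optimal social welfare `Π^*(x,k)`. -/
def optWelfare {n : ℕ} (x : Fin n → I) (k : ℕ) : ℝ :=
  ⨆ s : I, welfare x k s

/-- The median mechanism: outputs the `⌊(n+1)/2⌋`-th smallest reported location. -/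
def medianMech (n : ℕ) (x : Fin n → I) : I :=
  ((Finset.univ.val.map x).sort (· ≤ ·)).getD ((n + 1) / 2 - 1) 0

/-- In the subgame, agent `i` who travels is served if fewer than `k` travelers have
strictly higher priority. -/
def gameServed {n : ℕ} (x : Fin n → I) (s : I) (k : ℕ) (a : Fin n → Bool) (i : Fin n) : Prop :=
  a i = true ∧ ({j : Fin n | a j = true ∧ prio x s j i}).ncard < k

/-- Payoff in the subgame `Γ_x(s,k)`: a served traveler gets `1 - d`, an unserved
traveler gets `-d`, and a non-traveler gets `0`. -/
def payoff {n : ℕ} (x : Fin n → I) (s : I) (k : ℕ) (a : Fin n → Bool) (i : Fin n) : ℝ :=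
  if a i = true then
    (if gameServed x s k a i then 1 - |(s : ℝ) - x i| else -|(s : ℝ) - x i|)
  else 0

/-- (Ex-post) Nash equilibrium of the subgame: no agent gains by unilateral deviation. -/
def NashEq {n : ℕ} (x : Fin n → I) (s : I) (k : ℕ) (a : Fin n → Bool) : Prop :=
  ∀ (i : Fin n) (b : Bool), payoff x s k (Function.update a i b) i ≤ payoff x s k a i


namespace SubgameAux

variable {n : ℕ} (x : Fin n → I) (s : I)

lemma prio_irrefl (i : Fin n) : ¬ prio x s i i := by
  simp [prio]

lemma prio_trans {i j m : Fin n} (h1 : prio x s i j) (h2 : prio x s j m) :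
    prio x s i m := by
  rcases h1 with h1 | ⟨h1, h1'⟩ <;> rcases h2 with h2 | ⟨h2, h2'⟩
  · exact Or.inl (h1.trans h2)
  · exact Or.inl (lt_of_lt_of_eq h1 h2)
  · exact Or.inl (lt_of_eq_of_lt h1 h2)
  · exact Or.inr ⟨h1.trans h2, h1'.trans h2'⟩

lemma prio_total {i j : Fin n} (h : i ≠ j) : prio x s i j ∨ prio x s j i := by
  rcases lt_trichotomy (|(s:ℝ) - x i|) (|(s:ℝ) - x j|) with h1 | h1 | h1
  · exact Or.inl (Or.inl h1)
  · rcases h.lt_or_gt with h2 | h2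
    · exact Or.inl (Or.inr ⟨h1, h2⟩)
    · exact Or.inr (Or.inr ⟨h1.symm, h2⟩)
  · exact Or.inr (Or.inl h1)

lemma prio_dist_le {i j : Fin n} (h : prio x s j i) :
    |(s:ℝ) - x j| ≤ |(s:ℝ) - x i| := by
  rcases h with h | ⟨h, _⟩
  · exact h.le
  · exact h.le

/-- The priority rank of agent `i`. -/
def r (i : Fin n) : ℕ := ({j : Fin n | prio x s j i}).ncard

lemma served_iff (k : ℕ) (i : Fin n) : served x s k i ↔ r x s i < k := Iff.rfl

lemma r_lt_of_prio {i j : Fin n} (h : prio x s j i) : r x s j < r x s i := by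
  apply Set.ncard_lt_ncard _ (Set.toFinite _)
  constructor
  · intro m hm
    exact prio_trans x s hm h
  · intro hsub
    exact prio_irrefl x s j (hsub h)

lemma prio_iff {i j : Fin n} : prio x s j i ↔ r x s j < r x s i := by
  constructor
  · exact r_lt_of_prio x s
  · intro h
    by_contra hc
    rcases eq_or_ne j i with rfl | hne
    · exact lt_irrefl _ h
    · rcases prio_total x s hne with h1 | h1
      · exact hc h1
      · exact absurd h (not_lt.2 (r_lt_of_prio x s h1).le)

lemma r_lt (i : Fin n) : r x s i < n := by
  have h : r x s i < (Set.univ : Set (Fin n)).ncard := by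
    apply Set.ncard_lt_ncard _ (Set.toFinite _)
    constructor
    · exact Set.subset_univ _
    · intro h; exact prio_irrefl x s i (h (Set.mem_univ i))
  simpa [Set.ncard_univ, Nat.card_eq_fintype_card] using h

lemma r_inj : Function.Injective (r x s) := by
  intro i j h
  by_contra hne
  rcases prio_total x s hne with h1 | h1
  · have := r_lt_of_prio x s h1; omega
  · have := r_lt_of_prio x s h1; omega

lemma ncard_rank_lt (k : ℕ) (hk : k ≤ n) :
    ({j : Fin n | r x s j < k}).ncard = k := by
  set R : Fin n → Fin n := fun i => ⟨r x s i, r_lt x s i⟩ with hR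
  have hRinj : Function.Injective R := by
    intro i j h
    exact r_inj x s (by simpa [hR, Fin.ext_iff] using h)
  have hRbij : Function.Bijective R := Finite.injective_iff_bijective.1 hRinj
  have himg : R '' {j : Fin n | r x s j < k} = {m : Fin n | (m : ℕ) < k} := by
    ext m
    constructor
    · rintro ⟨j, hj, rfl⟩; exact hj
    · intro hm
      obtain ⟨j, rfl⟩ := hRbij.2 m
      exact ⟨j, hm, rfl⟩
  have h1 : ({j : Fin n | r x s j < k}).ncard = ({m : Fin n | (m : ℕ) < k}).ncard := by
    rw [← himg, Set.ncard_image_of_injective _ hRinj]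
  rw [h1]
  have h2 : {m : Fin n | (m : ℕ) < k} = Set.range (Fin.castLE hk) := by
    ext m
    simp only [Set.mem_setOf_eq, Set.mem_range]
    constructor
    · intro h; exact ⟨⟨m, h⟩, Fin.ext rfl⟩
    · rintro ⟨a, rfl⟩; exact a.2
  rw [h2, ← Set.image_univ, Set.ncard_image_of_injective _ (Fin.castLE_injective hk),
    Set.ncard_univ]
  simp [Nat.card_eq_fintype_card]

lemma ncard_served_prio (k : ℕ) (hk : k ≤ n) (i : Fin n) (hi : ¬ served x s k i) :
    ({j : Fin n | served x s k j ∧ prio x s j i}).ncard = k := by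
  have hi' : ¬ r x s i < k := hi
  have hset : {j : Fin n | served x s k j ∧ prio x s j i} = {j : Fin n | r x s j < k} := by
    ext j
    simp only [Set.mem_setOf_eq, served_iff]
    constructor
    · exact fun h => h.1
    · intro h
      exact ⟨h, (prio_iff x s).2 (by omega)⟩
  rw [hset]
  exact ncard_rank_lt x s k hk

lemma d_le_one (i : Fin n) : |(s:ℝ) - x i| ≤ 1 := by
  rw [abs_sub_le_iff]
  constructor <;> [skip; skip] <;>
    have h1 := s.2.1 <;> have h2 := s.2.2 <;> have h3 := (x i).2.1 <;> have h4 := (x i).2.2 <;>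
    linarith

lemma gameServed_of_served {k : ℕ} (a : Fin n → Bool) (i : Fin n)
    (hai : a i = true) (hi : served x s k i) : gameServed x s k a i := by
  have hi' : r x s i < k := hi
  have h2 : ({j : Fin n | a j = true ∧ prio x s j i}).ncard ≤
      ({j : Fin n | prio x s j i}).ncard :=
    Set.ncard_le_ncard (fun j hj => hj.2) (Set.toFinite _)
  exact ⟨hai, lt_of_le_of_lt h2 hi'⟩

lemma payoff_of_false {k : ℕ} (a : Fin n → Bool) (i : Fin n) (hai : a i = false) :
    payoff x s k a i = 0 := by
  simp [payoff, hai]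

lemma payoff_of_gameServed {k : ℕ} (a : Fin n → Bool) (i : Fin n)
    (h : gameServed x s k a i) : payoff x s k a i = 1 - |(s:ℝ) - x i| := by
  rw [payoff, if_pos h.1, if_pos h]

lemma payoff_of_not_gameServed {k : ℕ} (a : Fin n → Bool) (i : Fin n)
    (hai : a i = true) (h : ¬ gameServed x s k a i) :
    payoff x s k a i = -|(s:ℝ) - x i| := by
  rw [payoff, if_pos hai, if_neg h]

end SubgameAux

open SubgameAux in
theorem subgame_equilibrium_exists_and_unique_utilities
    (n k : ℕ) (hk : k ≤ n) (x : Fin n → I) (s : I) :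
    (∃ a : Fin n → Bool, NashEq x s k a) ∧
    (∀ a : Fin n → Bool, NashEq x s k a → ∀ i : Fin n,
      payoff x s k a i = util x s k i) := by
  have dle : ∀ i : Fin n, |(s:ℝ) - x i| ≤ 1 := d_le_one x s
  have dnn : ∀ i : Fin n, 0 ≤ |(s:ℝ) - x i| := fun i => abs_nonneg _
  constructor
  · -- existence
    refine ⟨fun i => if served x s k i then true else false, ?_⟩
    intro i b
    set a : Fin n → Bool := fun i => if served x s k i then true else false with ha
    rcases eq_or_ne b (a i) with rfl | hb
    · rw [Function.update_eq_self]
    by_cases hi : served x s k i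
    · have hai : a i = true := by simp [ha, hi]
      have hgs := gameServed_of_served x s a i hai hi
      rw [payoff_of_gameServed x s a i hgs]
      have hbf : b = false := by
        cases b
        · rfl
        · exact absurd hai.symm hb
      subst hbf
      rw [payoff_of_false x s _ i (by rw [Function.update_self])]
      linarith [dle i]
    · have hai : a i = false := by simp [ha, hi]
      rw [payoff_of_false x s a i hai]
      have hbt : b = true := by
        cases b
        · exact absurd hai.symm hb
        · rfl
      subst hbt
      have hup : Function.update a i true i = true := Function.update_self ..
      have hns : ¬ gameServed x s k (Function.update a i true) i := by
        intro hgs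
        have hsub : {j : Fin n | served x s k j ∧ prio x s j i} ⊆
            {j : Fin n | Function.update a i true j = true ∧ prio x s j i} := by
          intro j hj
          have hji : j ≠ i := fun h => hi (h ▸ hj.1)
          refine ⟨?_, hj.2⟩
          rw [Function.update_of_ne hji]
          simp [ha, hj.1]
        have hkk := ncard_served_prio x s k hk i hi
        have := Set.ncard_le_ncard hsub (Set.toFinite _)
        have := hgs.2
        omega
      rw [payoff_of_not_gameServed x s _ i hup hns]
      linarith [dnn i]
  · -- uniqueness of utilities
    intro a hNE i
    by_cases hi : served x s k i
    · rw [util, if_pos hi]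
      cases hai : a i with
      | true =>
          exact payoff_of_gameServed x s a i (gameServed_of_served x s a i hai hi)
      | false =>
          have h0 : payoff x s k a i = 0 := payoff_of_false x s a i hai
          have hup : Function.update a i true i = true := Function.update_self ..
          have hgs : gameServed x s k (Function.update a i true) i :=
            gameServed_of_served x s _ i hup hi
          have hle := hNE i true
          rw [payoff_of_gameServed x s _ i hgs, h0] at hle
          have : |(s:ℝ) - x i| = 1 := le_antisymm (dle i) (by linarith)
          rw [h0, this]
          ring
    · rw [util, if_neg hi]
      cases hai : a i with
      | false => exact payoff_of_false x s a i hai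
      | true =>
          by_cases hgs : gameServed x s k a i
          · -- some higher-priority served agent stays home; NE forces distance 1
            have hex : ∃ j : Fin n, served x s k j ∧ prio x s j i ∧ a j = false := by
              by_contra hcon
              push_neg at hcon
              have hsub : {j : Fin n | served x s k j ∧ prio x s j i} ⊆
                  {j : Fin n | a j = true ∧ prio x s j i} := by
                intro j hj
                have := hcon j hj.1 hj.2
                exact ⟨by simpa using this, hj.2⟩
              have hkk := ncard_served_prio x s k hk i hi
              have h1 := Set.ncard_le_ncard hsub (Set.toFinite _)
              have h2 := hgs.2
              omega
            obtain ⟨j, hjs, hji, haj⟩ := hex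
            have h0j : payoff x s k a j = 0 := payoff_of_false x s a j haj
            have hupj : Function.update a j true j = true := Function.update_self ..
            have hgsj : gameServed x s k (Function.update a j true) j := by
              refine ⟨hupj, ?_⟩
              have hsub : {m : Fin n | Function.update a j true m = true ∧ prio x s m j} ⊆
                  {m : Fin n | a m = true ∧ prio x s m i} := by
                intro m hm
                have hmj : m ≠ j := fun h => prio_irrefl x s j (h ▸ hm.2)
                obtain ⟨hm1, hm2⟩ := hm
                refine ⟨?_, prio_trans x s hm2 hji⟩
                rw [Function.update_of_ne hmj] at hm1
                exact hm1
              exact lt_of_le_of_lt (Set.ncard_le_ncard hsub (Set.toFinite _)) hgs.2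
            have hle := hNE j true
            rw [payoff_of_gameServed x s _ j hgsj, h0j] at hle
            have hdj : |(s:ℝ) - x j| = 1 := le_antisymm (dle j) (by linarith)
            have hdi : |(s:ℝ) - x i| = 1 := by
              have := prio_dist_le x s hji
              have := dle i
              linarith
            rw [payoff_of_gameServed x s a i hgs, hdi]
            ring
          · have hp : payoff x s k a i = -|(s:ℝ) - x i| :=
              payoff_of_not_gameServed x s a i hai hgs
            have hle := hNE i false
            rw [payoff_of_false x s _ i (Function.update_self ..), hp] at hle
            have : |(s:ℝ) - x i| = 0 := le_antisymm (by linarith) (dnn i)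
            rw [hp, this]
            ring
end
end

section
/- The equilibrium utility u_i*(s, x, k) = (1 - |s - x_i|) if i is among the k closest agents to s, else 0, is weakly single-peaked in s: if s < s' ≤ x_i or x_i ≤ s' < s then u_i*(s, x, k) ≤ u_i*(s', x, k). -/
open scoped Classical
open unitInterval

noncomputable section

theorem util_single_peaked (n k : ℕ) (hk : k ≤ n) (x : Fin n → I) (i : Fin n)
    (s s' : I)
    (h : ((s : ℝ) < s' ∧ (s' : ℝ) ≤ x i) ∨ ((x i : ℝ) ≤ s' ∧ (s' : ℝ) < s)) :
    util x s k i ≤ util x s' k i := by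
  have key : |(s : ℝ) - x i| = |(s' : ℝ) - x i| + |(s : ℝ) - s'| := by
    rcases h with ⟨h1, h2⟩ | ⟨h1, h2⟩
    · rw [abs_of_nonpos (by linarith), abs_of_nonpos (by linarith),
        abs_of_neg (by linarith : (s : ℝ) - s' < 0)]; ring
    · rw [abs_of_nonneg (by linarith), abs_of_nonneg (by linarith),
        abs_of_pos (by linarith : (0:ℝ) < (s : ℝ) - s')]; ring
  have hle : |(s' : ℝ) - x i| ≤ |(s : ℝ) - x i| := by
    have := abs_nonneg ((s : ℝ) - s'); linarith
  have hsub : {j : Fin n | prio x s' j i} ⊆ {j : Fin n | prio x s j i} := by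
    intro j hj
    have tri : |(s : ℝ) - x j| ≤ |(s' : ℝ) - x j| + |(s : ℝ) - s'| := by
      have : (s : ℝ) - x j = ((s : ℝ) - s') + ((s' : ℝ) - x j) := by ring
      rw [this]
      calc |((s : ℝ) - s') + ((s' : ℝ) - x j)| ≤ |(s : ℝ) - s'| + |(s' : ℝ) - x j| :=
        abs_add_le _ _
      _ = |(s' : ℝ) - x j| + |(s : ℝ) - s'| := by ring
    rcases hj with hlt | ⟨heq, hij⟩
    · left; linarith
    · have hj' : |(s : ℝ) - x j| ≤ |(s : ℝ) - x i| := by linarith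
      rcases lt_or_eq_of_le hj' with h3 | h3
      · exact Or.inl h3
      · exact Or.inr ⟨h3, hij⟩
  have hserve : served x s k i → served x s' k i := by
    intro hs
    exact lt_of_le_of_lt (Set.ncard_le_ncard hsub (Set.toFinite _)) hs
  unfold util
  split_ifs with hs hs'
  · linarith
  · exact absurd (hserve hs) hs'
  · have h1 : |(s' : ℝ) - x i| ≤ 1 := by
      have := s'.2.1; have := s'.2.2; have := (x i).2.1; have := (x i).2.2
      rw [abs_le]; constructor <;> linarith
    linarith
  · exact le_refl _
end
end

section
/- If an agent i is among the k closest agents to a facility location s, and the facility moves to s' with s < s' ≤ x_i or x_i ≤ s' < s, then agent i remains among the k closest agents to s'. -/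
open scoped Classical
open unitInterval

noncomputable section

theorem served_moves_toward_peak (n k : ℕ) (x : Fin n → I) (i : Fin n)
    (s s' : I)
    (h : ((s : ℝ) < s' ∧ (s' : ℝ) ≤ x i) ∨ ((x i : ℝ) ≤ s' ∧ (s' : ℝ) < s))
    (hserved : served x s k i) :
    served x s' k i := by
  have hdi : |(s:ℝ) - x i| = |(s':ℝ) - x i| + |(s:ℝ) - s'| := by
    rcases h with ⟨h1, h2⟩ | ⟨h1, h2⟩
    · rw [abs_of_nonpos (by linarith), abs_of_nonpos (by linarith),
        abs_of_nonpos (by linarith)]; ring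
    · rw [abs_of_nonneg (by linarith), abs_of_nonneg (by linarith),
        abs_of_nonneg (by linarith)]; ring
  have hsub : {j : Fin n | prio x s' j i} ⊆ {j : Fin n | prio x s j i} := by
    intro j hj
    simp only [Set.mem_setOf_eq, prio] at hj ⊢
    have htri : |(s:ℝ) - x j| ≤ |(s':ℝ) - x j| + |(s:ℝ) - s'| := by
      have he : (s:ℝ) - x j = ((s:ℝ) - s') + ((s':ℝ) - x j) := by ring
      rw [he]
      calc |((s:ℝ) - s') + ((s':ℝ) - x j)| ≤ |(s:ℝ) - s'| + |(s':ℝ) - x j| :=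
            abs_add_le _ _
        _ = |(s':ℝ) - x j| + |(s:ℝ) - s'| := by ring
    rcases hj with hlt | ⟨heq, hij⟩
    · left; linarith
    · rcases lt_or_eq_of_le (show |(s:ℝ) - x j| ≤ |(s:ℝ) - x i| by linarith) with h' | h'
      · left; exact h'
      · right; exact ⟨h', hij⟩
  exact lt_of_le_of_lt (Set.ncard_le_ncard hsub (Set.toFinite _)) hserved
end
end

section
/- A mechanism M : [0,1]^n → [0,1] is uncompromising if and only if it is a generalized median mechanism, i.e., there exist constants a_S ∈ [0,1] for each subset S of agents such that M(x) = min over subsets S of max( max_{i∈S} x_i, a_S ) for all profiles x (with max over the empty set taken as 0). -/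
open scoped Classical
open unitInterval

noncomputable section

section Lemmas
variable {n : ℕ} {M : (Fin n → I) → I}

-- restated in I-order
lemma unc_up (hM : Uncompromising M) (x : Fin n → I) (i : Fin n)
    (h : M x < x i) (x' : I) (h' : M x ≤ x') : M (Function.update x i x') = M x :=
  (hM x i).1 (Subtype.coe_lt_coe.2 h) x' (Subtype.coe_le_coe.2 h')

lemma unc_down (hM : Uncompromising M) (x : Fin n → I) (i : Fin n)
    (h : x i < M x) (x' : I) (h' : x' ≤ M x) : M (Function.update x i x') = M x :=
  (hM x i).2 (Subtype.coe_lt_coe.2 h) x' (Subtype.coe_le_coe.2 h')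

lemma peak_up (hM : Uncompromising M) (x : Fin n → I) (i : Fin n)
    (hp : x i = M x) (x' : I) (h' : M x ≤ x') : M x ≤ M (Function.update x i x') := by
  set y := Function.update x i x' with hy
  by_contra hc
  push_neg at hc
  have hyi : M y < y i := by
    have : y i = x' := Function.update_self i x' x
    rw [this]; exact lt_of_lt_of_le hc h'
  have := unc_up hM y i hyi (x i) (by rw [hp]; exact hc.le)
  rw [hy, Function.update_idem, Function.update_eq_self] at this
  exact hc.ne this.symm

lemma peak_down (hM : Uncompromising M) (x : Fin n → I) (i : Fin n)
    (hp : x i = M x) (x' : I) (h' : x' ≤ M x) : M (Function.update x i x') ≤ M x := by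
  set y := Function.update x i x' with hy
  by_contra hc
  push_neg at hc
  have hyi : y i < M y := by
    have : y i = x' := Function.update_self i x' x
    rw [this]; exact lt_of_le_of_lt h' hc
  have := unc_down hM y i hyi (x i) (by rw [hp]; exact hc.le)
  rw [hy, Function.update_idem, Function.update_eq_self] at this
  exact hc.ne this

lemma mono_coord (hM : Uncompromising M) (x : Fin n → I) (i : Fin n)
    (t t' : I) (h : t ≤ t') :
    M (Function.update x i t) ≤ M (Function.update x i t') := by
  have hyi : (Function.update x i t) i = t := Function.update_self i t x
  rcases lt_trichotomy t (M (Function.update x i t)) with hlt | heq | hgt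
  · rcases le_or_gt t' (M (Function.update x i t)) with h1 | h1
    · have := unc_down hM (Function.update x i t) i (by rw [hyi]; exact hlt) t' h1
      rw [Function.update_idem] at this; rw [this]
    · have hmid := unc_down hM (Function.update x i t) i (by rw [hyi]; exact hlt)
        (M (Function.update x i t)) le_rfl
      have hzi : (Function.update (Function.update x i t) i (M (Function.update x i t))) i
          = M (Function.update (Function.update x i t) i (M (Function.update x i t))) := by
        rw [hmid, Function.update_self]
      have h2 := peak_up hM _ i hzi t' (by rw [hmid]; exact h1.le)
      rw [hmid, Function.update_idem, Function.update_idem] at h2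
      exact h2
  · have := peak_up hM (Function.update x i t) i (hyi.trans heq) t' (heq ▸ h)
    rw [Function.update_idem] at this; exact this
  · have := unc_up hM (Function.update x i t) i (by rw [hyi]; exact hgt) t' (le_trans hgt.le h)
    rw [Function.update_idem] at this; rw [this]

lemma mono (hM : Uncompromising M) (x y : Fin n → I) (h : ∀ i, x i ≤ y i) :
    M x ≤ M y := by
  have key : ∀ s : Finset (Fin n), ∀ x y : Fin n → I, (∀ i, x i ≤ y i) →
      (∀ i ∉ s, x i = y i) → M x ≤ M y := by
    intro s
    induction s using Finset.induction_on with
    | empty =>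
      intro x y h h0
      have : x = y := funext fun i => h0 i (Finset.notMem_empty i)
      rw [this]
    | @insert a s ha ih =>
      intro x y h h0
      set x' := Function.update x a (y a) with hx'
      have h1 : M x ≤ M x' := by
        have := mono_coord hM x a (x a) (y a) (h a)
        rwa [Function.update_eq_self] at this
      have h2 : M x' ≤ M y := by
        apply ih
        · intro i
          rcases eq_or_ne i a with rfl | hia
          · rw [hx', Function.update_self]
          · rw [hx', Function.update_of_ne hia]; exact h i
        · intro i hi
          rcases eq_or_ne i a with rfl | hia
          · rw [hx', Function.update_self]
          · rw [hx', Function.update_of_ne hia]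
            exact h0 i (by simp [hia, hi])
      exact h1.trans h2
  exact key Finset.univ x y h (fun i hi => absurd (Finset.mem_univ i) hi)

lemma move_down_set (hM : Uncompromising M) (x : Fin n → I) (S : Finset (Fin n))
    (h : ∀ i ∈ S, x i < M x) :
    M (fun i => if i ∈ S then 0 else x i) = M x := by
  induction S using Finset.induction_on with
  | empty => simp
  | @insert a S ha ih =>
    have hS : ∀ i ∈ S, x i < M x := fun i hi => h i (Finset.mem_insert_of_mem hi)
    set z := fun i => if i ∈ S then (0:I) else x i with hz
    have hMz : M z = M x := ih hS
    have hza : z a = x a := by rw [hz]; simp [ha]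
    have hlt : z a < M z := by rw [hza, hMz]; exact h a (Finset.mem_insert_self a S)
    have := unc_down hM z a hlt 0 (by rw [hMz]; exact nonneg')
    rw [hMz] at this
    rw [← this]
    congr 1
    funext j
    rcases eq_or_ne j a with rfl | hja
    · simp [Function.update_self]
    · simp [Function.update_of_ne hja, Finset.mem_insert, hja, hz]

lemma move_up_set (hM : Uncompromising M) (x : Fin n → I) (S : Finset (Fin n))
    (h : ∀ i ∈ S, M x < x i) :
    M (fun i => if i ∈ S then 1 else x i) = M x := by
  induction S using Finset.induction_on with
  | empty => simp
  | @insert a S ha ih =>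
    have hS : ∀ i ∈ S, M x < x i := fun i hi => h i (Finset.mem_insert_of_mem hi)
    set z := fun i => if i ∈ S then (1:I) else x i with hz
    have hMz : M z = M x := ih hS
    have hza : z a = x a := by rw [hz]; simp [ha]
    have hlt : M z < z a := by rw [hza, hMz]; exact h a (Finset.mem_insert_self a S)
    have := unc_up hM z a hlt 1 (by rw [hMz]; exact le_one')
    rw [hMz] at this
    rw [← this]
    congr 1
    funext j
    rcases eq_or_ne j a with rfl | hja
    · simp [Function.update_self]
    · simp [Function.update_of_ne hja, Finset.mem_insert, hja, hz]

end Lemmas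

section Aux
variable {n : ℕ} {M : (Fin n → I) → I}

lemma sup_update_not_mem (x : Fin n → I) (i : Fin n) (x' : I)
    (S : Finset (Fin n)) (hi : i ∉ S) :
    S.sup (Function.update x i x') = S.sup x :=
  Finset.sup_congr rfl (fun j hj => Function.update_of_ne (by rintro rfl; exact hi hj) _ _)

lemma unc_to_gmm (hM : Uncompromising M) : IsGMM M := by
  refine ⟨fun S => M (fun i => if i ∈ S then 0 else 1), fun x => ?_⟩
  apply le_antisymm
  · apply Finset.le_inf
    intro S _
    by_contra hc
    push_neg at hc
    have h1 : ∀ i ∈ S, x i < M x := fun i hi =>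
      lt_of_le_of_lt ((Finset.le_sup hi).trans (le_max_left _ _)) hc
    have h2 := move_down_set hM x S h1
    have h3 : M (fun i => if i ∈ S then (0:I) else x i)
        ≤ M (fun i => if i ∈ S then (0:I) else 1) := by
      apply mono hM
      intro j
      by_cases hj : j ∈ S <;> simp [hj, le_one']
    rw [h2] at h3
    exact absurd (h3.trans (le_max_right _ _)) (not_le.2 hc)
  · set S := Finset.univ.filter (fun i : Fin n => x i ≤ M x) with hS
    refine (Finset.inf_le (Finset.mem_univ S)).trans (max_le ?_ ?_)
    · exact Finset.sup_le fun i hi => (Finset.mem_filter.1 hi).2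
    · set T := Finset.univ.filter (fun i : Fin n => M x < x i) with hT
      have hT2 : ∀ i ∈ T, M x < x i := fun i hi => (Finset.mem_filter.1 hi).2
      have h2 := move_up_set hM x T hT2
      have h3 : M (fun i => if i ∈ S then (0:I) else 1)
          ≤ M (fun i => if i ∈ T then (1:I) else x i) := by
        apply mono hM
        intro j
        by_cases hj : x j ≤ M x
        · have : j ∈ S := Finset.mem_filter.2 ⟨Finset.mem_univ j, hj⟩
          simp [this, nonneg']
        · have hjS : j ∉ S := fun hc => hj (Finset.mem_filter.1 hc).2
          have hjT : j ∈ T := Finset.mem_filter.2 ⟨Finset.mem_univ j, not_le.1 hj⟩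
          simp [hjS, hjT]
      rw [h2] at h3
      exact h3

lemma gmm_to_unc (hG : IsGMM M) : Uncompromising M := by
  obtain ⟨a, ha⟩ := hG
  intro x i
  have hall : ∀ S : Finset (Fin n), M x ≤ max (S.sup x) (a S) := by
    intro S
    rw [ha x]
    exact Finset.inf_le (Finset.mem_univ S)
  obtain ⟨S₀, _, hS₀⟩ := Finset.exists_mem_eq_inf (Finset.univ : Finset (Finset (Fin n)))
    Finset.univ_nonempty (fun S => max (S.sup x) (a S))
  have hS₀' : M x = max (S₀.sup x) (a S₀) := by rw [ha x]; exact hS₀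
  constructor
  · intro h x' h'
    have hlt : M x < x i := Subtype.coe_lt_coe.1 h
    have hle : M x ≤ x' := Subtype.coe_le_coe.1 h'
    have hiS₀ : i ∉ S₀ := by
      intro hc
      exact absurd ((Finset.le_sup hc).trans (le_max_left _ _)) (not_le.2 (hS₀' ▸ hlt))
    apply le_antisymm
    · rw [ha (Function.update x i x')]
      refine (Finset.inf_le (Finset.mem_univ S₀)).trans ?_
      rw [sup_update_not_mem x i x' S₀ hiS₀]
      exact le_of_eq hS₀'.symm
    · rw [ha (Function.update x i x')]
      apply Finset.le_inf
      intro S _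
      by_cases hiS : i ∈ S
      · have : x' ≤ S.sup (Function.update x i x') := by
          have := Finset.le_sup (f := Function.update x i x') hiS
          rwa [Function.update_self] at this
        exact hle.trans (this.trans (le_max_left _ _))
      · rw [sup_update_not_mem x i x' S hiS]
        exact hall S
  · intro h x' h'
    have hlt : x i < M x := Subtype.coe_lt_coe.1 h
    have hle : x' ≤ M x := Subtype.coe_le_coe.1 h'
    apply le_antisymm
    · rw [ha (Function.update x i x')]
      refine (Finset.inf_le (Finset.mem_univ S₀)).trans (max_le ?_ ?_)
      · apply Finset.sup_le
        intro j hj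
        rcases eq_or_ne j i with rfl | hji
        · rw [Function.update_self]; exact hle
        · rw [Function.update_of_ne hji]
          exact ((Finset.le_sup hj).trans (le_max_left _ _)).trans (le_of_eq hS₀'.symm)
      · exact (le_max_right _ _).trans (le_of_eq hS₀'.symm)
    · rw [ha (Function.update x i x')]
      apply Finset.le_inf
      intro S _
      by_cases hiS : i ∈ S
      · rcases le_or_gt (M x) (a S) with hA | hA
        · exact hA.trans (le_max_right _ _)
        · have hsup : M x ≤ S.sup x := (le_max_iff.1 (hall S)).resolve_right (not_le.2 hA)
          obtain ⟨j, hjS, hj⟩ := Finset.exists_mem_eq_sup S ⟨i, hiS⟩ x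
          have hji : j ≠ i := by
            intro hc
            rw [hc] at hj
            exact absurd (hsup.trans hj.le) (not_le.2 hlt)
          have : x j ≤ S.sup (Function.update x i x') := by
            have := Finset.le_sup (f := Function.update x i x') hjS
            rwa [Function.update_of_ne hji] at this
          exact (hsup.trans (hj.le.trans this)).trans (le_max_left _ _)
      · rw [sup_update_not_mem x i x' S hiS]
        exact hall S

end Aux

theorem uncompromising_iff_GMM (n : ℕ) (M : (Fin n → I) → I) :
    Uncompromising M ↔ IsGMM M :=
  ⟨unc_to_gmm, gmm_to_unc⟩
end
end

section
/- Every uncompromising mechanism is DIC for every capacity k ≤ n: for every agent i, every true profile x, every report profile of others, and every misreport x_i', the agent's equilibrium utility from truthful reporting is at least that from misreporting. -/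
open scoped Classical
open unitInterval

noncomputable section

/-- If `t` lies metrically between `x i` and `s`, then priority over `i` at `t`
implies priority over `i` at `s`. -/
lemma prio_mono {n : ℕ} (x : Fin n → I) (s t : I) (i : Fin n)
    (h : |(s : ℝ) - x i| = |(t : ℝ) - x i| + |(s : ℝ) - (t : ℝ)|) :
    ∀ j, prio x t j i → prio x s j i := by
  intro j hj
  have tri : |(s : ℝ) - x j| ≤ |(s : ℝ) - (t : ℝ)| + |(t : ℝ) - x j| :=
    abs_sub_le _ _ _
  rcases hj with hlt | ⟨heq, hji⟩
  · left; linarith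
  · rcases lt_or_eq_of_le (by linarith : |(s : ℝ) - x j| ≤ |(s : ℝ) - x i|) with h' | h'
    · left; exact h'
    · right; exact ⟨h', hji⟩

lemma util_mono {n : ℕ} (x : Fin n → I) (s t : I) (k : ℕ) (i : Fin n)
    (h : |(s : ℝ) - x i| = |(t : ℝ) - x i| + |(s : ℝ) - (t : ℝ)|) :
    util x s k i ≤ util x t k i := by
  have hdist : |(t : ℝ) - x i| ≤ |(s : ℝ) - x i| := by
    have := abs_nonneg ((s : ℝ) - (t : ℝ)); linarith
  have hserved : served x s k i → served x t k i := by
    intro hs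
    have hsub : {j : Fin n | prio x t j i} ⊆ {j : Fin n | prio x s j i} :=
      fun j hj => prio_mono x s t i h j hj
    exact lt_of_le_of_lt (Set.ncard_le_ncard hsub (Set.toFinite _)) hs
  unfold util
  by_cases hs : served x s k i
  · rw [if_pos hs, if_pos (hserved hs)]; linarith
  · rw [if_neg hs]
    by_cases ht : served x t k i
    · rw [if_pos ht]
      have h1 : |(t : ℝ) - x i| ≤ 1 := by
        have := t.2.1; have := t.2.2; have := (x i).2.1; have := (x i).2.2
        rw [abs_le]; constructor <;> linarith
      linarith
    · rw [if_neg ht]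

theorem uncompromising_implies_DIC (n : ℕ) (M : (Fin n → I) → I)
    (hM : Uncompromising M) :
    ∀ k ≤ n, DIC n k M := by
  intro k _ i x y x'
  apply util_mono
  set t := M (Function.update y i (x i)) with ht
  set s := M (Function.update y i x') with hs
  -- the outcome is a fixed point when agent i reports it
  have fix : ∀ b : I, M (Function.update y i (M (Function.update y i b)))
      = M (Function.update y i b) := by
    intro b
    set tb := M (Function.update y i b) with htb
    rcases lt_trichotomy ((tb : ℝ)) ((b : ℝ)) with hc | hc | hc
    · have := (hM (Function.update y i b) i).1 (by simpa using hc) tb le_rfl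
      rwa [Function.update_idem] at this
    · rw [show Function.update y i tb = Function.update y i b from by
        rw [Subtype.ext hc]]
    · have := (hM (Function.update y i b) i).2 (by simpa using hc) tb le_rfl
      rwa [Function.update_idem] at this
  -- if i's report is below the outcome, no other report gives a lower outcome
  have key : ∀ a b : I, (a : ℝ) < M (Function.update y i a) →
      (M (Function.update y i b) : ℝ) < M (Function.update y i a) → False := by
    intro a b ha hb
    have h1 := (hM (Function.update y i a) i).2 (by simpa using ha)
      (M (Function.update y i b)) (le_of_lt hb)
    rw [Function.update_idem] at h1
    rw [(fix b).symm.trans h1] at hb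
    exact lt_irrefl _ hb
  -- if i's report is above the outcome, no other report gives a higher outcome
  have key2 : ∀ a b : I, (M (Function.update y i a) : ℝ) < a →
      (M (Function.update y i a) : ℝ) < M (Function.update y i b) → False := by
    intro a b ha hb
    have h1 := (hM (Function.update y i a) i).1 (by simpa using ha)
      (M (Function.update y i b)) (le_of_lt hb)
    rw [Function.update_idem] at h1
    rw [(fix b).symm.trans h1] at hb
    exact lt_irrefl _ hb
  rcases lt_trichotomy ((x i : ℝ)) ((t : ℝ)) with h' | h' | h'
  · have hts : (t : ℝ) ≤ s := by
      by_contra hc; push_neg at hc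
      exact key (x i) x' h' hc
    rw [abs_of_nonneg (by linarith : (0:ℝ) ≤ (s : ℝ) - x i),
      abs_of_nonneg (by linarith : (0:ℝ) ≤ (t : ℝ) - x i),
      abs_of_nonneg (by linarith : (0:ℝ) ≤ (s : ℝ) - (t : ℝ))]
    ring
  · rw [h']; simp
  · have hts : (s : ℝ) ≤ t := by
      by_contra hc; push_neg at hc
      exact key2 (x i) x' h' hc
    rw [abs_of_nonpos (by linarith : (s : ℝ) - x i ≤ 0),
      abs_of_nonpos (by linarith : (t : ℝ) - x i ≤ 0),
      abs_of_nonpos (by linarith : (s : ℝ) - (t : ℝ) ≤ 0)]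
    ring
end
end

section
/- The mechanism that locates the facility at 1/4 if a designated agent i reports a location ≤ 1/2 and at 3/4 otherwise is DIC when k = n, but is not DIC for any capacity k < n (with n ≥ 2). -/
open scoped Classical
open unitInterval

noncomputable section

/-- The dictatorial-style mechanism of Example 3.3: locate the facility at `1/4` if the
designated agent `i` reports a location `≤ 1/2`, and at `3/4` otherwise. -/
def quarterMech {n : ℕ} (i : Fin n) (x : Fin n → I) : I :=
  if (x i : ℝ) ≤ 1 / 2 then (⟨1 / 4, by norm_num⟩ : I) else (⟨3 / 4, by norm_num⟩ : I)


lemma prio_irrefl {n : ℕ} (x : Fin n → I) (s : I) (i : Fin n) : ¬ prio x s i i := by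
  rintro (h | ⟨h, h'⟩)
  · exact lt_irrefl _ h
  · exact lt_irrefl _ h'

lemma served_of_n {n : ℕ} (x : Fin n → I) (s : I) (i : Fin n) :
    served x s n i := by
  unfold served
  have hsub : {j : Fin n | prio x s j i} ⊆ ({i}ᶜ : Set (Fin n)) := by
    intro j hj
    simp only [Set.mem_compl_iff, Set.mem_singleton_iff]
    rintro rfl
    exact prio_irrefl x s j hj
  calc ({j : Fin n | prio x s j i}).ncard ≤ ({i}ᶜ : Set (Fin n)).ncard :=
        Set.ncard_le_ncard hsub (Set.toFinite _)
    _ < n := by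
        have h1 : ({i}ᶜ : Set (Fin n)).ncard < (Set.univ : Set (Fin n)).ncard := by
          apply Set.ncard_lt_ncard _ Set.finite_univ
          constructor
          · exact Set.subset_univ _
          · intro h
            exact (h (Set.mem_univ i)) rfl
        simpa [Set.ncard_univ] using h1

lemma util_of_n {n : ℕ} (x : Fin n → I) (s : I) (i : Fin n) :
    util x s n i = 1 - |(s : ℝ) - x i| := by
  rw [util, if_pos (served_of_n x s i)]

lemma ncard_compl_singleton {n : ℕ} (i : Fin n) :
    ({i}ᶜ : Set (Fin n)).ncard = n - 1 := by
  rw [Set.ncard_eq_toFinset_card', Set.toFinset_compl, Set.toFinset_singleton,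
    Finset.card_compl]
  simp

lemma quarter_le (t : ℝ) (ht : t ≤ 1/2) : |(1/4:ℝ) - t| ≤ |(3/4:ℝ) - t| := by
  rcases abs_cases ((1/4:ℝ) - t) with ⟨e1, e2⟩ | ⟨e1, e2⟩ <;>
    rcases abs_cases ((3/4:ℝ) - t) with ⟨f1, f2⟩ | ⟨f1, f2⟩ <;> linarith

lemma threequarter_le (t : ℝ) (ht : 1/2 ≤ t) : |(3/4:ℝ) - t| ≤ |(1/4:ℝ) - t| := by
  rcases abs_cases ((1/4:ℝ) - t) with ⟨e1, e2⟩ | ⟨e1, e2⟩ <;>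
    rcases abs_cases ((3/4:ℝ) - t) with ⟨f1, f2⟩ | ⟨f1, f2⟩ <;> linarith

theorem quarterMech_DIC_iff (n : ℕ) (hn : 2 ≤ n) (i : Fin n) :
    DIC n n (quarterMech i) ∧
    (∀ k, 1 ≤ k → k < n → ¬ DIC n k (quarterMech i)) := by
  constructor
  · -- DIC for k = n
    intro i0 x y x'
    rw [util_of_n, util_of_n]
    by_cases h : i0 = i
    · subst h
      simp only [quarterMech, Function.update_self]
      split_ifs with ha hb hb
      · exact le_refl _
      · have := threequarter_le (x i0 : ℝ) (le_of_lt (lt_of_not_ge hb))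
        norm_num
        linarith
      · have := quarter_le (x i0 : ℝ) hb
        norm_num
        linarith
      · exact le_refl _
    · have hne : i ≠ i0 := fun h' => h h'.symm
      simp [quarterMech, Function.update_of_ne hne]
  · -- not DIC for k < n
    intro k hk hkn hDIC
    set q : I := ⟨1/4, by norm_num⟩ with hq
    set t : I := ⟨3/4, by norm_num⟩ with ht
    set x : Fin n → I := Function.update (fun _ => q) i ⟨1/2, by norm_num⟩ with hx
    have hxi : x i = ⟨1/2, by norm_num⟩ := Function.update_self _ _ _
    have hxj : ∀ j, j ≠ i → x j = q := fun j hj => Function.update_of_ne hj _ _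
    have hM1 : quarterMech i (Function.update x i (x i)) = q := by
      have hc : ((Function.update x i (x i) i : I) : ℝ) ≤ 1/2 := by
        rw [Function.update_self, hxi]
      rw [quarterMech, if_pos hc]
    have hM2 : quarterMech i (Function.update x i 1) = t := by
      have hc : ¬ ((Function.update x i (1 : I) i : I) : ℝ) ≤ 1/2 := by
        rw [Function.update_self]; norm_num
      rw [quarterMech, if_neg hc]
    have h1 : util x q k i = 0 := by
      rw [util, if_neg]
      unfold served
      have hset : {j : Fin n | prio x q j i} = ({i}ᶜ : Set (Fin n)) := by
        ext j
        simp only [Set.mem_setOf_eq, Set.mem_compl_iff, Set.mem_singleton_iff]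
        constructor
        · rintro hp rfl
          exact prio_irrefl x q j hp
        · intro hj
          left
          rw [hxj j hj, hxi, hq]
          norm_num
      rw [hset, ncard_compl_singleton]
      omega
    have h2 : util x t k i = 3/4 := by
      rw [util, if_pos]
      · rw [hxi, ht]
        norm_num [abs_of_nonneg]
      · unfold served
        have hset : {j : Fin n | prio x t j i} = (∅ : Set (Fin n)) := by
          ext j
          simp only [Set.mem_setOf_eq, Set.mem_empty_iff_false, iff_false]
          intro hp
          by_cases hj : j = i
          · subst hj; exact prio_irrefl x t j hp
          · have e1 : |(t : ℝ) - (x j : ℝ)| = 1/2 := by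
              rw [hxj j hj, hq, ht]
              norm_num [abs_of_nonneg]
            have e2 : |(t : ℝ) - (x i : ℝ)| = 1/4 := by
              rw [hxi, ht]
              norm_num [abs_of_nonneg]
            rcases hp with hlt | ⟨heq, _⟩
            · rw [e1, e2] at hlt; norm_num at hlt
            · rw [e1, e2] at heq; norm_num at heq
        rw [hset, Set.ncard_empty]
        omega
    have hfin := hDIC i x x 1
    rw [hM1, hM2, h1, h2] at hfin
    linarith
end
end

section
/- For n ≥ 2 and 1 ≤ k ≤ ⌈(n-1)/2⌉, every uncompromising mechanism M has worst-case approximation ratio at least 2k/(k+1): for every ε > 0 there exists a profile x with Π*(x,k) / Π_M(x,k) > 2k/(k+1) − ε. -/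
open scoped Classical
open unitInterval

noncomputable section

namespace Aux

variable {n : ℕ}

lemma abs_sub_le_one (a b : I) : |(a:ℝ) - b| ≤ 1 := by
  rw [abs_sub_le_iff]
  constructor <;> linarith [a.2.1, a.2.2, b.2.1, b.2.2]

lemma prio_irrefl (x : Fin n → I) (s : I) (i : Fin n) : ¬ prio x s i i := by
  rintro (h | ⟨-, h⟩) <;> exact absurd h (lt_irrefl _)

lemma prio_trans {x : Fin n → I} {s : I} {i j l : Fin n} :
    prio x s i j → prio x s j l → prio x s i l := by
  rintro (h1 | ⟨h1, h1'⟩) (h2 | ⟨h2, h2'⟩)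
  · exact Or.inl (h1.trans h2)
  · exact Or.inl (h2 ▸ h1)
  · exact Or.inl (h1 ▸ h2)
  · exact Or.inr ⟨h1.trans h2, h1'.trans h2'⟩

lemma prio_total {x : Fin n → I} {s : I} {i j : Fin n} (h : i ≠ j) :
    prio x s i j ∨ prio x s j i := by
  rcases lt_trichotomy (|(s:ℝ) - x i|) (|(s:ℝ) - x j|) with h1 | h1 | h1
  · exact Or.inl (Or.inl h1)
  · rcases h.lt_or_gt with h2 | h2
    · exact Or.inl (Or.inr ⟨h1, h2⟩)
    · exact Or.inr (Or.inr ⟨h1.symm, h2⟩)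
  · exact Or.inr (Or.inl h1)

noncomputable def rankF (x : Fin n → I) (s : I) (i : Fin n) : ℕ :=
  (Finset.univ.filter fun j => prio x s j i).card

lemma served_iff {x : Fin n → I} {s : I} {k : ℕ} {i : Fin n} :
    served x s k i ↔ rankF x s i < k := by
  unfold served rankF
  rw [show {j : Fin n | prio x s j i} = ↑(Finset.univ.filter fun j => prio x s j i) by
    ext j; simp, Set.ncard_coe_finset]

lemma rankF_lt {x : Fin n → I} {s : I} {i j : Fin n} (h : prio x s i j) :
    rankF x s i < rankF x s j := by
  apply Finset.card_lt_card
  have hsub : (Finset.univ.filter fun m => prio x s m i) ⊆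
      (Finset.univ.filter fun m => prio x s m j) := by
    intro m hm
    simp only [Finset.mem_filter, Finset.mem_univ, true_and] at hm ⊢
    exact prio_trans hm h
  rw [Finset.ssubset_iff_of_subset hsub]
  exact ⟨i, by simpa using h, by simpa using prio_irrefl x s i⟩

lemma rankF_inj (x : Fin n → I) (s : I) : Function.Injective (rankF x s) := by
  intro i j hij
  by_contra h
  rcases prio_total h with hp | hp
  · exact absurd hij (rankF_lt hp).ne
  · exact absurd hij.symm (rankF_lt hp).ne

lemma rankF_lt_n (x : Fin n → I) (s : I) (i : Fin n) : rankF x s i < n := by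
  have hsub : (Finset.univ.filter fun j => prio x s j i) ⊆ Finset.univ.erase i := by
    intro j hj
    simp only [Finset.mem_filter, Finset.mem_univ, true_and] at hj
    simp only [Finset.mem_erase, Finset.mem_univ, and_true]
    rintro rfl
    exact prio_irrefl _ _ _ hj
  have h1 := Finset.card_le_card hsub
  rw [Finset.card_erase_of_mem (Finset.mem_univ i), Finset.card_univ, Fintype.card_fin] at h1
  have h2 := i.pos
  unfold rankF
  omega

lemma card_served_le (x : Fin n → I) (s : I) (k : ℕ) :
    (Finset.univ.filter fun i => served x s k i).card ≤ k := by
  have h := Finset.card_le_card_of_injOn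
    (s := Finset.univ.filter fun i => served x s k i) (t := Finset.range k) (rankF x s)
    (fun i hi => by
      simp only [Finset.mem_coe, Finset.mem_filter, Finset.mem_univ, true_and, served_iff] at hi
      exact Finset.mem_range.2 hi)
    ((rankF_inj x s).injOn)
  exact h.trans (le_of_eq (Finset.card_range k))

lemma card_served_ge (x : Fin n → I) (s : I) {k : ℕ} (hk : k ≤ n) :
    k ≤ (Finset.univ.filter fun i => served x s k i).card := by
  rcases Nat.eq_zero_or_pos k with rfl | hkpos
  · exact Nat.zero_le _
  have hn : 0 < n := lt_of_lt_of_le hkpos hk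
  set ρ : Fin n → Fin n := fun i => ⟨rankF x s i, rankF_lt_n x s i⟩ with hρ
  have hinj : Function.Injective ρ := by
    intro i j hij
    exact rankF_inj x s (congrArg Fin.val hij)
  have hbij : Function.Bijective ρ := (Finite.injective_iff_bijective).1 hinj
  set e := Equiv.ofBijective ρ hbij with he
  have h := Finset.card_le_card_of_injOn (s := (Finset.univ : Finset (Fin k)))
    (t := Finset.univ.filter fun i => served x s k i)
    (fun m : Fin k => e.symm (Fin.castLE hk m))
    (fun m _ => by
      simp only [Finset.mem_coe, Finset.mem_filter, Finset.mem_univ, true_and, served_iff]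
      have : rankF x s (e.symm (Fin.castLE hk m)) = (ρ (e.symm (Fin.castLE hk m))).1 := rfl
      rw [this]
      have : ρ (e.symm (Fin.castLE hk m)) = Fin.castLE hk m := e.apply_symm_apply _
      rw [this]
      exact m.2)
    (fun a _ b _ hab => by
      have := e.symm.injective hab
      exact Fin.castLE_injective hk this)
  simpa using h

lemma util_nonneg (x : Fin n → I) (s : I) (k : ℕ) (i : Fin n) : 0 ≤ util x s k i := by
  unfold util
  split
  · linarith [abs_sub_le_one s (x i)]
  · exact le_refl 0

lemma util_le_one (x : Fin n → I) (s : I) (k : ℕ) (i : Fin n) : util x s k i ≤ 1 := by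
  unfold util
  split
  · linarith [abs_nonneg ((s:ℝ) - x i)]
  · norm_num

lemma welfare_le_n (x : Fin n → I) (k : ℕ) (s : I) : welfare x k s ≤ n := by
  unfold welfare
  calc ∑ i, util x s k i ≤ ∑ _i : Fin n, (1:ℝ) :=
        Finset.sum_le_sum fun i _ => util_le_one x s k i
    _ = n := by simp

lemma welfare_bdd (x : Fin n → I) (k : ℕ) : BddAbove (Set.range (welfare x k)) := by
  refine ⟨n, ?_⟩
  rintro v ⟨s, rfl⟩
  exact welfare_le_n x k s

lemma le_opt (x : Fin n → I) (k : ℕ) (c : I) : welfare x k c ≤ optWelfare x k :=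
  le_ciSup (welfare_bdd x k) c

end Aux

namespace Aux

variable {n : ℕ}

lemma rankF_zero {x : Fin n → I} {s : I} {i₀ : Fin n}
    (h0 : x i₀ = s) (hpos : ∀ j, j ≠ i₀ → |(s:ℝ) - x j| ≠ 0) :
    rankF x s i₀ = 0 := by
  unfold rankF
  rw [Finset.card_eq_zero, Finset.filter_eq_empty_iff]
  intro j _
  have hdist : |(s:ℝ) - x i₀| = 0 := by rw [h0]; simp
  rintro (h | ⟨h, h'⟩)
  · rw [hdist] at h
    exact absurd h (not_lt_of_ge (abs_nonneg _))
  · rcases eq_or_ne j i₀ with rfl | hne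
    · exact absurd h' (lt_irrefl _)
    · exact hpos j hne (by rw [h, hdist])

lemma served_i₀ {x : Fin n → I} {s : I} {k : ℕ} {i₀ : Fin n} (hk : 1 ≤ k)
    (h0 : x i₀ = s) (hpos : ∀ j, j ≠ i₀ → |(s:ℝ) - x j| ≠ 0) :
    served x s k i₀ := by
  rw [served_iff, rankF_zero h0 hpos]
  omega

lemma welfare_ge_one {x : Fin n → I} {s : I} {k : ℕ} {i₀ : Fin n} (hk : 1 ≤ k)
    (h0 : x i₀ = s) (hpos : ∀ j, j ≠ i₀ → |(s:ℝ) - x j| ≠ 0) :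
    1 ≤ welfare x k s := by
  have hu : util x s k i₀ = 1 := by
    unfold util
    rw [if_pos (served_i₀ hk h0 hpos), h0]
    simp
  calc (1:ℝ) = util x s k i₀ := hu.symm
    _ ≤ welfare x k s :=
      Finset.single_le_sum (fun i _ => util_nonneg x s k i) (Finset.mem_univ i₀)

lemma welfare_ge_cluster {x : Fin n → I} {k : ℕ} {c : I}
    (hc : k ≤ (Finset.univ.filter fun i => x i = c).card) :
    (k : ℝ) ≤ welfare x k c := by
  classical
  set T := Finset.univ.filter fun i => x i = c with hT
  have hkn : k ≤ n := hc.trans (le_trans (Finset.card_filter_le _ _)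
    (by rw [Finset.card_univ, Fintype.card_fin]))
  set S := Finset.univ.filter (fun i => served x c k i) with hS
  have hST : ∀ i ∈ S, x i = c := by
    intro i hi
    simp only [hS, Finset.mem_filter, Finset.mem_univ, true_and, served_iff] at hi
    by_contra hxc
    have hsub : T ⊆ Finset.univ.filter fun j => prio x c j i := by
      intro j hj
      simp only [hT, Finset.mem_filter, Finset.mem_univ, true_and] at hj
      simp only [Finset.mem_filter, Finset.mem_univ, true_and]
      left
      rw [hj]
      simp only [sub_self, abs_zero]
      rw [abs_pos, sub_ne_zero]
      exact fun hcc => hxc (Subtype.ext hcc.symm)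
    have := (hc.trans (Finset.card_le_card hsub))
    unfold rankF at hi
    omega
  have hcard : k ≤ S.card := card_served_ge x c hkn
  have hsum : ∀ i ∈ S, util x c k i = 1 := by
    intro i hi
    have hserved : served x c k i := by
      simp only [hS, Finset.mem_filter, Finset.mem_univ, true_and] at hi; exact hi
    unfold util
    rw [if_pos hserved, hST i hi]
    simp
  calc (k:ℝ) ≤ (S.card : ℝ) := by exact_mod_cast hcard
    _ = ∑ i ∈ S, util x c k i := by rw [Finset.sum_congr rfl hsum]; simp
    _ ≤ ∑ i, util x c k i :=
      Finset.sum_le_sum_of_subset_of_nonneg (Finset.subset_univ S)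
        (fun i _ _ => util_nonneg x c k i)
    _ = welfare x k c := rfl

lemma welfare_le_main {x : Fin n → I} {s : I} {k : ℕ} {i₀ : Fin n} {d : ℝ}
    (hk : 1 ≤ k) (hd0 : 0 < d) (hd1 : d ≤ 1)
    (h0 : x i₀ = s)
    (hfar : ∀ i, i ≠ i₀ → d ≤ |(s:ℝ) - x i|) :
    welfare x k s ≤ 1 + ((k:ℝ) - 1) * (1 - d) := by
  classical
  set S := Finset.univ.filter (fun i => served x s k i) with hS
  have hpos : ∀ j, j ≠ i₀ → |(s:ℝ) - x j| ≠ 0 := fun j hj =>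
    ne_of_gt (lt_of_lt_of_le hd0 (hfar j hj))
  have hi₀S : i₀ ∈ S := by
    simp only [hS, Finset.mem_filter, Finset.mem_univ, true_and]
    exact served_i₀ hk h0 hpos
  have hwf : welfare x k s = ∑ i ∈ S, (1 - |(s:ℝ) - x i|) := by
    unfold welfare util
    rw [Finset.sum_filter]
  rw [hwf, ← Finset.add_sum_erase S _ hi₀S]
  have h1 : (1:ℝ) - |(s:ℝ) - x i₀| = 1 := by rw [h0]; simp
  rw [h1]
  have hcard : (S.erase i₀).card ≤ k - 1 := by
    rw [Finset.card_erase_of_mem hi₀S]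
    have h2 := card_served_le x s k
    rw [← hS] at h2
    omega
  have hbound : ∑ i ∈ S.erase i₀, (1 - |(s:ℝ) - x i|) ≤ ((S.erase i₀).card : ℝ) * (1 - d) := by
    have := Finset.sum_le_card_nsmul (S.erase i₀) (fun i => 1 - |(s:ℝ) - x i|) (1 - d)
      (fun i hi => by
        have hne : i ≠ i₀ := Finset.ne_of_mem_erase hi
        have := hfar i hne
        linarith)
    simpa [nsmul_eq_mul] using this
  have hcast : ((S.erase i₀).card : ℝ) ≤ (k:ℝ) - 1 := by
    have : ((S.erase i₀).card : ℝ) ≤ ((k - 1 : ℕ) : ℝ) := by exact_mod_cast hcard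
    rw [Nat.cast_sub hk] at this
    simpa using this
  have h1d : (0:ℝ) ≤ 1 - d := by linarith
  nlinarith [hbound, hcast, mul_le_mul_of_nonneg_right hcast h1d]

end Aux

namespace Aux

lemma key_ineq {n k : ℕ} (hk1 : 1 ≤ k)
    {M : (Fin n → I) → I} (x : Fin n → I) (s : I) (i₀ : Fin n) {δ ε : ℝ}
    (hδ0 : 0 ≤ δ) (hδ4 : δ ≤ 1/4) (hδε : 2*(k:ℝ)*δ ≤ ε/2) (hε : 0 < ε)
    (hMx : M x = s)
    (h0 : x i₀ = s)
    (hfar : ∀ i, i ≠ i₀ → 1/2 - δ ≤ |(s:ℝ) - x i|)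
    (c : I) (hc : k ≤ (Finset.univ.filter fun i => x i = c).card) :
    (2*(k:ℝ)/((k:ℝ)+1) - ε) * welfare x k (M x) < optWelfare x k := by
  rw [hMx]
  set K := (k:ℝ) with hK
  have hK1 : 1 ≤ K := by rw [hK]; exact_mod_cast hk1
  have hd0 : 0 < 1/2 - δ := by linarith
  have hd1 : 1/2 - δ ≤ 1 := by linarith
  have hpos : ∀ j, j ≠ i₀ → |(s:ℝ) - x j| ≠ 0 := fun j hj =>
    ne_of_gt (lt_of_lt_of_le hd0 (hfar j hj))
  have hA1 : 1 ≤ welfare x k s := welfare_ge_one hk1 h0 hpos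
  have hA2 : welfare x k s ≤ 1 + (K - 1) * (1 - (1/2 - δ)) :=
    welfare_le_main hk1 hd0 hd1 h0 hfar
  have hopt : K ≤ optWelfare x k := le_trans (welfare_ge_cluster hc) (le_opt x k c)
  set A := welfare x k s with hA
  rcases le_or_gt (2*K/(K+1)) ε with hcase | hcase
  · have h1 : (2*K/(K+1) - ε) * A ≤ 0 :=
      mul_nonpos_of_nonpos_of_nonneg (by linarith) (by linarith)
    linarith
  · have hKp : (0:ℝ) < K + 1 := by linarith
    have hQpos : (0:ℝ) ≤ 2*K/(K+1) := by positivity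
    have e1 : (2*K/(K+1))*A ≤ (2*K/(K+1))*(1 + (K - 1) * (1 - (1/2 - δ))) :=
      mul_le_mul_of_nonneg_left hA2 hQpos
    have e2 : (2*K/(K+1))*(1 + (K - 1) * (1 - (1/2 - δ))) ≤ K + 2*K*δ := by
      rw [div_mul_eq_mul_div, div_le_iff₀ hKp]
      nlinarith [mul_nonneg (by linarith : (0:ℝ) ≤ K) hδ0]
    have e3 : ε ≤ ε * A := le_mul_of_one_le_right hε.le hA1
    have e4 : (2*K/(K+1) - ε)*A = (2*K/(K+1))*A - ε*A := sub_mul _ _ _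
    linarith

end Aux

namespace Aux

lemma cluster_card {n k : ℕ} (x : Fin n → I) (c : I) (f : Fin k → Fin n)
    (hf : Function.Injective f) (hx : ∀ m, x (f m) = c) :
    k ≤ (Finset.univ.filter fun i => x i = c).card := by
  classical
  have h := Finset.card_le_card_of_injOn (s := (Finset.univ : Finset (Fin k)))
    (t := Finset.univ.filter fun i => x i = c) f
    (fun m _ => by simp [hx m]) (hf.injOn)
  simpa using h

lemma endpoint_case {n k : ℕ} (hn : 2 ≤ n) (hk1 : 1 ≤ k) (hk2 : 2*k ≤ n)
    {M : (Fin n → I) → I} (hM : Uncompromising M) (b : I)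
    (hfarb : 1/2 ≤ |((M (fun _ => b)) : ℝ) - (b:ℝ)|)
    {δ ε : ℝ} (hδ0 : 0 ≤ δ) (hδ4 : δ ≤ 1/4) (hδε : 2*(k:ℝ)*δ ≤ ε/2) (hε : 0 < ε) :
    ∃ x : Fin n → I,
      (2 * (k : ℝ) / ((k : ℝ) + 1) - ε) * welfare x k (M x) < optWelfare x k := by
  classical
  obtain ⟨s, hs⟩ : ∃ s, M (fun _ => b) = s := ⟨_, rfl⟩
  rw [hs] at hfarb
  have hkn : k < n := by omega
  obtain ⟨i₀, hi₀⟩ : ∃ i : Fin n, (i:ℕ) = 0 := ⟨⟨0, by omega⟩, rfl⟩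
  set x : Fin n → I := Function.update (fun _ => b) i₀ s with hx
  have hMx : M x = s := by
    rcases abs_cases ((s:ℝ) - (b:ℝ)) with ⟨habs, hsign⟩ | ⟨habs, hsign⟩
    · have hlt : ((fun _ => b) i₀ : ℝ) < (M (fun _ => b) : ℝ) := by
        rw [hs]; simp only []; linarith [hfarb, habs]
      have h := (hM (fun _ => b) i₀).2 hlt s (by rw [hs])
      rw [hs] at h
      exact h
    · have hlt : (M (fun _ => b) : ℝ) < ((fun _ => b) i₀ : ℝ) := by
        rw [hs]; simp only []; linarith [hfarb, habs]
      have h := (hM (fun _ => b) i₀).1 hlt s (by rw [hs])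
      rw [hs] at h
      exact h
  refine ⟨x, ?_⟩
  refine Aux.key_ineq hk1 x s i₀ hδ0 hδ4 hδε hε hMx ?_ ?_ b ?_
  · rw [hx]
    rw [Function.update_self]
  · intro i hi
    have hxi : x i = b := by
      rw [hx]
      rw [Function.update_of_ne hi]
    rw [hxi]
    linarith
  · refine Aux.cluster_card x b (fun m => ⟨(m:ℕ)+1, by omega⟩) ?_ ?_
    · intro p q hpq
      have : (p:ℕ)+1 = (q:ℕ)+1 := congrArg Fin.val hpq
      exact Fin.ext (by omega)
    · intro m
      rw [hx]
      show Function.update (fun _ => b) i₀ s ⟨(m:ℕ)+1, _⟩ = b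
      rw [Function.update_of_ne ?_]
      intro hcon
      have := congrArg Fin.val hcon
      simp only [hi₀] at this
      omega

end Aux

theorem DIC_lower_bound_small_k (n k : ℕ) (hn : 2 ≤ n) (hk1 : 1 ≤ k)
    (hk2 : 2 * k ≤ n)  -- i.e. `k ≤ ⌈(n-1)/2⌉`
    (M : (Fin n → I) → I) (hM : Uncompromising M) :
    ∀ ε : ℝ, 0 < ε →
      ∃ x : Fin n → I,
        (2 * (k : ℝ) / ((k : ℝ) + 1) - ε) * welfare x k (M x) < optWelfare x k := by
  intro ε hε
  classical
  have hkR : (0:ℝ) < k := by exact_mod_cast hk1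
  set δ : ℝ := min (ε/(4*k)) (1/4) with hδ
  have hδ0 : 0 ≤ δ := le_min (by positivity) (by norm_num)
  have hδ4 : δ ≤ 1/4 := min_le_right _ _
  have hδε : 2*(k:ℝ)*δ ≤ ε/2 := by
    have h1 : δ ≤ ε/(4*k) := min_le_left _ _
    have h2 : 2*(k:ℝ)*δ ≤ 2*(k:ℝ)*(ε/(4*k)) :=
      mul_le_mul_of_nonneg_left h1 (by positivity)
    have h3 : 2*(k:ℝ)*(ε/(4*k)) = ε/2 := by field_simp; ring
    linarith
  have hkn : k < n := by omega
  by_cases hA : (M (fun _ => (1:I)) : ℝ) ≤ 1/2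
  · refine Aux.endpoint_case hn hk1 hk2 hM 1 ?_ hδ0 hδ4 hδε hε
    rw [abs_of_nonpos (by simp; exact (M (fun _ => (1:I))).2.2)]
    simp only [Set.Icc.coe_one]
    linarith
  · by_cases hB : 1/2 ≤ (M (fun _ => (0:I)) : ℝ)
    · refine Aux.endpoint_case hn hk1 hk2 hM 0 ?_ hδ0 hδ4 hδε hε
      rw [abs_of_nonneg (by simp; exact (M (fun _ => (0:I))).2.1)]
      simp only [Set.Icc.coe_zero]
      linarith
    · push_neg at hA hB
      set y : ℕ → Fin n → I := fun j i => if (i:ℕ) < j then 1 else 0 with hy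
      have hy0 : y 0 = (fun _ => (0:I)) := by funext i; simp [hy]
      have hyn : y n = (fun _ => (1:I)) := by funext i; simp [hy, i.isLt]
      have hP0 : (M (y 0) : ℝ) < 1/2 := by rw [hy0]; exact hB
      have hPn : ¬ (M (y n) : ℝ) < 1/2 := by rw [hyn]; linarith
      have cross : ∃ j < n, (M (y j) : ℝ) < 1/2 ∧ ¬ (M (y (j+1)) : ℝ) < 1/2 := by
        by_contra hcon
        push_neg at hcon
        have hall : ∀ j, j ≤ n → (M (y j) : ℝ) < 1/2 := by
          intro j hj
          induction j with
          | zero => exact hP0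
          | succ m ih => exact hcon m (by omega) (ih (by omega))
        exact hPn (hall n le_rfl)
      obtain ⟨j, hjn, hPj, hPj1⟩ := cross
      push_neg at hPj1
      obtain ⟨a, haval⟩ : ∃ a : Fin n, (a:ℕ) = j := ⟨⟨j, hjn⟩, rfl⟩
      obtain ⟨sR, hsR⟩ : ∃ sR : ℝ, (M (y j) : ℝ) = sR := ⟨_, rfl⟩
      rw [hsR] at hPj
      set w : ℝ := max ((sR + 1/2)/2) (1/2 - δ) with hw
      have hw1 : sR < w := lt_of_lt_of_le (by linarith) (le_max_left _ _)
      have hw2 : w ≤ 1/2 := max_le (by linarith) (by linarith)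
      have hw3 : 1/2 - δ ≤ w := le_max_right _ _
      have hw0 : 0 ≤ w := by linarith
      set wI : I := ⟨w, ⟨hw0, by linarith⟩⟩ with hwI
      set z : Fin n → I := Function.update (y j) a wI with hz
      have hza : z a = wI := by rw [hz]; rw [Function.update_self]
      have hz0 : Function.update z a (0:I) = y j := by
        rw [hz, Function.update_idem]
        funext i
        rcases eq_or_ne i a with rfl | hne
        · rw [Function.update_self]
          simp [hy, haval]
        · rw [Function.update_of_ne hne]
      have hz1 : Function.update z a (1:I) = y (j+1) := by
        rw [hz, Function.update_idem]
        funext i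
        rcases eq_or_ne i a with rfl | hne
        · rw [Function.update_self]
          simp [hy, haval]
        · rw [Function.update_of_ne hne]
          have hia : (i:ℕ) ≠ j := fun h => hne (Fin.ext (by rw [haval, h]))
          simp only [hy]
          by_cases hij : (i:ℕ) < j
          · rw [if_pos hij, if_pos (by omega)]
          · rw [if_neg hij, if_neg (by omega)]
      have ht : (M z : ℝ) = w := by
        rcases lt_trichotomy ((M z : ℝ)) w with hlt | heq | hgt
        · exfalso
          have h := (hM z a).1 (by rw [hza]; exact hlt) (1:I) (by simp; exact (M z).2.2)
          rw [hz1] at h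
          rw [h] at hPj1
          linarith
        · exact heq
        · exfalso
          have h := (hM z a).2 (by rw [hza]; exact hgt) (0:I) (by simp; exact (M z).2.1)
          rw [hz0] at h
          have h2 : sR = (M z : ℝ) := by rw [← hsR, h]
          linarith
      have hMz : M z = wI := Subtype.ext ht
      refine ⟨z, ?_⟩
      have hfar : ∀ i, i ≠ a → 1/2 - δ ≤ |(wI:ℝ) - (z i : ℝ)| := by
        intro i hi
        have hzi : z i = y j i := by rw [hz]; rw [Function.update_of_ne hi]
        rw [hzi]
        have hwc : (wI:ℝ) = w := rfl
        by_cases hij : (i:ℕ) < j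
        · have h1 : y j i = 1 := by simp [hy, hij]
          rw [h1, hwc]
          simp only [Set.Icc.coe_one]
          rw [abs_of_nonpos (by linarith : w - 1 ≤ 0)]
          linarith
        · have h1 : y j i = 0 := by simp [hy, hij]
          rw [h1, hwc]
          simp only [Set.Icc.coe_zero]
          rw [abs_of_nonneg (by linarith : (0:ℝ) ≤ w - 0)]
          linarith
      rcases le_or_gt k j with hkj | hkj
      · refine Aux.key_ineq hk1 z wI a hδ0 hδ4 hδε hε hMz hza hfar (1:I) ?_
        refine Aux.cluster_card z 1 (fun m => ⟨(m:ℕ), by omega⟩) ?_ ?_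
        · intro p q hpq
          simp only [Fin.mk.injEq] at hpq
          exact Fin.ext hpq
        · intro m
          have hne : (⟨(m:ℕ), by omega⟩ : Fin n) ≠ a := by
            intro hcon
            have h2 : (m:ℕ) = (a:ℕ) := congrArg Fin.val hcon
            have h3 := m.isLt
            omega
          rw [hz]
          show Function.update (y j) a wI ⟨(m:ℕ), _⟩ = 1
          rw [Function.update_of_ne hne]
          have h4 : ((⟨(m:ℕ), by omega⟩ : Fin n) : ℕ) < j := by
            show (m:ℕ) < j
            have := m.isLt
            omega
          simp [hy, h4]
      · refine Aux.key_ineq hk1 z wI a hδ0 hδ4 hδε hε hMz hza hfar (0:I) ?_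
        refine Aux.cluster_card z 0 (fun m => ⟨j+1+(m:ℕ), by omega⟩) ?_ ?_
        · intro p q hpq
          have : j+1+(p:ℕ) = j+1+(q:ℕ) := congrArg Fin.val hpq
          exact Fin.ext (by omega)
        · intro m
          have hne : (⟨j+1+(m:ℕ), by omega⟩ : Fin n) ≠ a := by
            intro hcon
            have h2 : j+1+(m:ℕ) = (a:ℕ) := congrArg Fin.val hcon
            omega
          rw [hz]
          show Function.update (y j) a wI ⟨j+1+(m:ℕ), _⟩ = 0
          rw [Function.update_of_ne hne]
          have h4 : ¬ ((⟨j+1+(m:ℕ), by omega⟩ : Fin n) : ℕ) < j := by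
            show ¬ j+1+(m:ℕ) < j
            omega
          simp [hy, h4]
end
end

section
/- For n ≥ 2 and ⌈(n-1)/2⌉ < k ≤ n with (n−1)/(k+1) > 1, every uncompromising mechanism has worst-case approximation ratio at least (n−1)/(k+1): for every ε > 0 there exists a profile x with Π*(x,k)/Π_M(x,k) > (n−1)/(k+1) − ε. -/
open scoped Classical
open unitInterval

noncomputable section

namespace LB


lemma card_filter_Ico (n a b : ℕ) (hbn : b ≤ n) :
    (Finset.univ.filter fun i : Fin n => a ≤ i.val ∧ i.val < b).card = b - a := by
  classical
  rw [← Nat.card_Ico a b]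
  apply Finset.card_bij (fun (i : Fin n) _ => i.val)
  · intro i hi
    simp only [Finset.mem_filter] at hi
    simp [Finset.mem_Ico, hi.2.1, hi.2.2]
  · intro i hi j hj h
    exact Fin.ext h
  · intro j hj
    simp only [Finset.mem_Ico] at hj
    exact ⟨⟨j, lt_of_lt_of_le hj.2 hbn⟩, by simp [hj.1, hj.2], rfl⟩

lemma ncard_setOf {n : ℕ} (p : Fin n → Prop) :
    {j | p j}.ncard = (Finset.univ.filter p).card := by
  classical
  rw [← Set.ncard_coe_finset]
  congr 1
  ext j; simp

lemma served_of_subset {n k : ℕ} {x : Fin n → I} {s : I} {i : Fin n} {A : Set (Fin n)}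
    (h : {j | prio x s j i} ⊆ A) (hA : A.ncard < k) : served x s k i :=
  lt_of_le_of_lt (Set.ncard_le_ncard h (Set.toFinite A)) hA

lemma ncard_lt_of_served {n k : ℕ} {x : Fin n → I} {s : I} {i : Fin n} {A : Set (Fin n)}
    (h : A ⊆ {j | prio x s j i}) (hs : served x s k i) : A.ncard < k :=
  lt_of_le_of_lt (Set.ncard_le_ncard h (Set.toFinite _)) hs

lemma abs_sub_le_one (s c : I) : |(s : ℝ) - c| ≤ 1 := by
  rw [abs_le]
  constructor <;> nlinarith [s.2.1, s.2.2, c.2.1, c.2.2]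

lemma util_nonneg {n : ℕ} (x : Fin n → I) (s : I) (k : ℕ) (i : Fin n) :
    0 ≤ util x s k i := by
  unfold util
  split
  · linarith [abs_sub_le_one s (x i)]
  · exact le_refl 0

lemma util_le_one {n : ℕ} (x : Fin n → I) (s : I) (k : ℕ) (i : Fin n) :
    util x s k i ≤ 1 := by
  unfold util
  split
  · linarith [abs_nonneg ((s : ℝ) - x i)]
  · norm_num

lemma welfare_nonneg {n : ℕ} (x : Fin n → I) (k : ℕ) (s : I) :
    0 ≤ welfare x k s :=
  Finset.sum_nonneg fun i _ => util_nonneg x s k i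

lemma welfare_le {n : ℕ} (x : Fin n → I) (k : ℕ) (s : I) :
    welfare x k s ≤ n := by
  calc welfare x k s ≤ ∑ _i : Fin n, (1 : ℝ) :=
        Finset.sum_le_sum fun i _ => util_le_one x s k i
    _ = n := by simp

lemma opt_ge {n : ℕ} (x : Fin n → I) (k : ℕ) (s : I) :
    welfare x k s ≤ optWelfare x k := by
  apply le_ciSup (f := fun s => welfare x k s)
  exact ⟨n, by rintro w ⟨t, rfl⟩; exact welfare_le x k t⟩

lemma sum_ite_card {n : ℕ} (p : Fin n → Prop) (c : ℝ) :
    (∑ i : Fin n, if p i then c else 0) =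
      ((Finset.univ.filter p).card : ℝ) * c := by
  classical
  rw [Finset.sum_ite, Finset.sum_const_zero, add_zero, Finset.sum_const, nsmul_eq_mul]

end LB

namespace LB

lemma card_filter_eq {n : ℕ} (p : Fin n → Prop) [DecidablePred p] (a b : ℕ) (hbn : b ≤ n)
    (hp : ∀ i, p i ↔ (a ≤ i.val ∧ i.val < b)) :
    (Finset.univ.filter p).card = b - a := by
  rw [← Nat.card_Ico a b]
  apply Finset.card_bij (fun (i : Fin n) _ => i.val)
  · intro i hi
    simp only [Finset.mem_filter, hp] at hi
    simp [Finset.mem_Ico, hi.2.1, hi.2.2]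
  · intro i hi j hj h
    exact Fin.ext h
  · intro j hj
    simp only [Finset.mem_Ico] at hj
    exact ⟨⟨j, lt_of_lt_of_le hj.2 hbn⟩, by simp [Finset.mem_filter, hp, hj.1, hj.2], rfl⟩

lemma ncard_eq {n : ℕ} (p : Fin n → Prop) (a b : ℕ) (hbn : b ≤ n)
    (hp : ∀ i, p i ↔ (a ≤ i.val ∧ i.val < b)) :
    {j | p j}.ncard = b - a := by
  classical
  rw [ncard_setOf, card_filter_eq p a b hbn hp]

lemma sum_indicator {n : ℕ} (p : Fin n → Prop) [DecidablePred p] (c : ℝ) (a b : ℕ)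
    (hbn : b ≤ n) (hp : ∀ i, p i ↔ (a ≤ i.val ∧ i.val < b)) :
    (∑ i : Fin n, if p i then c else 0) = ((b - a : ℕ) : ℝ) * c := by
  rw [Finset.sum_ite, Finset.sum_const_zero, add_zero, Finset.sum_const, nsmul_eq_mul,
    card_filter_eq p a b hbn hp]

lemma prio_const {n : ℕ} (c s : I) (j i : Fin n) :
    prio (fun _ : Fin n => c) s j i ↔ j < i := by
  unfold prio
  simp

lemma served_const {n k : ℕ} (c s : I) (i : Fin n) :
    served (fun _ : Fin n => c) s k i ↔ i.val < k := by
  unfold served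
  rw [ncard_eq _ 0 i.val (le_of_lt i.isLt)
    (fun j => by rw [prio_const]; rw [Fin.lt_def]; omega)]
  omega

lemma welfare_const {n k : ℕ} (hk : k ≤ n) (c s : I) :
    welfare (fun _ : Fin n => c) k s = k * (1 - |(s : ℝ) - c|) := by
  unfold welfare util
  rw [sum_indicator (fun i => served (fun _ : Fin n => c) s k i) _ 0 k hk
    (fun i => by show served _ _ _ _ ↔ _; rw [served_const]; omega)]
  norm_num

end LB

namespace LB

def Xp (n m : ℕ) : Fin n → I :=
  fun i => if i.val < m then 0 else if i.val = m then ⟨1/2, by norm_num⟩ else 1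

lemma Xp_coe {n m : ℕ} (i : Fin n) :
    ((Xp n m i : ℝ)) = if i.val < m then 0 else if i.val = m then 1/2 else 1 := by
  unfold Xp
  split_ifs <;> norm_num

lemma served_of_bound {n k : ℕ} {x : Fin n → I} {s : I} {i : Fin n} {a b : ℕ}
    (hbn : b ≤ n) (hbk : b - a < k)
    (h : ∀ j : Fin n, prio x s j i → (a ≤ j.val ∧ j.val < b)) : served x s k i := by
  apply served_of_subset (A := {j : Fin n | a ≤ j.val ∧ j.val < b}) (fun j hj => h j hj)
  rw [ncard_eq (fun j : Fin n => a ≤ j.val ∧ j.val < b) a b hbn (fun _ => Iff.rfl)]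
  exact hbk

lemma util_served {n k : ℕ} {x : Fin n → I} {s : I} {i : Fin n} (h : served x s k i) :
    util x s k i = 1 - |(s : ℝ) - x i| := if_pos h

lemma Xp_dist_zero {n m : ℕ} (i : Fin n) :
    |((0 : I) : ℝ) - Xp n m i| = if i.val < m then 0 else if i.val = m then 1/2 else 1 := by
  rw [Set.Icc.coe_zero, Xp_coe]
  split_ifs <;> norm_num

lemma Xp_dist_one {n m : ℕ} (i : Fin n) :
    |((1 : I) : ℝ) - Xp n m i| = if i.val < m then 1 else if i.val = m then 1/2 else 0 := by
  rw [Set.Icc.coe_one, Xp_coe]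
  split_ifs <;> norm_num

lemma Xp_dist_half {n m : ℕ} {s : I} (hs : (s : ℝ) = 1/2) (i : Fin n) :
    |(s : ℝ) - Xp n m i| = if i.val = m then 0 else 1/2 := by
  rw [hs, Xp_coe]
  rcases lt_trichotomy i.val m with h | h | h
  · rw [if_pos h, if_neg (by omega)]
    norm_num
  · rw [if_neg (by omega), if_pos h, if_pos h]
    norm_num
  · rw [if_neg (by omega), if_neg (by omega), if_neg (by omega)]
    norm_num

/-- welfare of `Xp` at `0` when `k ≤ m` -/
lemma Xw_zero_big {n m k : ℕ} (hm : m < n) (hkm : k ≤ m) :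
    (k : ℝ) ≤ welfare (Xp n m) k 0 := by
  have hkn : k ≤ n := le_trans hkm (le_of_lt hm)
  have key : ∀ i : Fin n, (if 0 ≤ i.val ∧ i.val < k then (1:ℝ) else 0) ≤ util (Xp n m) 0 k i := by
    intro i
    split_ifs with h
    · -- i is a zero agent with i.val < k
      have hiz : i.val < m := lt_of_lt_of_le h.2 hkm
      have hserved : served (Xp n m) 0 k i := by
        apply served_of_bound (a := 0) (b := i.val) (le_of_lt i.isLt) (by omega)
        intro j hj
        rcases hj with hj | hj
        · exfalso
          rw [Xp_dist_zero i, if_pos hiz] at hj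
          exact absurd hj (not_lt.2 (abs_nonneg _))
        · exact ⟨Nat.zero_le _, hj.2⟩
      rw [util_served hserved, Xp_dist_zero i, if_pos hiz]
      norm_num
    · exact util_nonneg _ _ _ _
  calc (k:ℝ) = ∑ i : Fin n, (if 0 ≤ i.val ∧ i.val < k then (1:ℝ) else 0) := by
        rw [sum_indicator _ _ 0 k hkn (fun _ => Iff.rfl)]; simp
    _ ≤ welfare (Xp n m) k 0 := Finset.sum_le_sum (fun i _ => key i)

/-- welfare of `Xp` at `0` when `m < k` -/
lemma Xw_zero_small {n m k : ℕ} (hm : m < n) (hmk : m < k) :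
    (m : ℝ) + 1/2 ≤ welfare (Xp n m) k 0 := by
  have key : ∀ i : Fin n,
      (if 0 ≤ i.val ∧ i.val < m then (1:ℝ) else 0)
        + (if m ≤ i.val ∧ i.val < m + 1 then (1/2 : ℝ) else 0) ≤ util (Xp n m) 0 k i := by
    intro i
    rcases lt_trichotomy i.val m with h | h | h
    · rw [if_pos ⟨Nat.zero_le _, h⟩, if_neg (by omega)]
      have hserved : served (Xp n m) 0 k i := by
        apply served_of_bound (a := 0) (b := i.val) (le_of_lt i.isLt) (by omega)
        intro j hj
        rcases hj with hj | hj
        · exfalso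
          rw [Xp_dist_zero i, if_pos h] at hj
          exact absurd hj (not_lt.2 (abs_nonneg _))
        · exact ⟨Nat.zero_le _, hj.2⟩
      rw [util_served hserved, Xp_dist_zero i, if_pos h]
      norm_num
    · -- the lone agent
      rw [if_neg (by omega), if_pos (by omega)]
      have hserved : served (Xp n m) 0 k i := by
        apply served_of_bound (a := 0) (b := m) (by omega) (by omega)
        intro j hj
        have hdi : |((0:I) : ℝ) - Xp n m i| = 1/2 := by
          rw [Xp_dist_zero i, if_neg (by omega), if_pos h]
        rcases hj with hj | hj
        · rw [hdi] at hj
          rw [Xp_dist_zero j] at hj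
          constructor
          · exact Nat.zero_le _
          · by_contra hc
            push_neg at hc
            rw [if_neg (by omega)] at hj
            split_ifs at hj <;> linarith
        · exfalso
          rw [hdi, Xp_dist_zero j] at hj
          obtain ⟨hj1, hj2⟩ := hj
          rw [Fin.lt_def] at hj2
          split_ifs at hj1 with h1 h2 <;> first | linarith | omega
      rw [util_served hserved, Xp_dist_zero i, if_neg (by omega), if_pos h]
      norm_num
    · rw [if_neg (by omega), if_neg (by omega)]
      simpa using util_nonneg (Xp n m) 0 k i
  have hsum := Finset.sum_le_sum (fun i (_ : i ∈ Finset.univ) => key i)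
  rw [Finset.sum_add_distrib,
    sum_indicator _ _ 0 m (by omega) (fun _ => Iff.rfl),
    sum_indicator _ _ m (m+1) (by omega) (fun _ => Iff.rfl)] at hsum
  have h1 : ((m - 0 : ℕ) : ℝ) = m := by norm_num
  have h2 : ((m + 1 - m : ℕ) : ℝ) = 1 := by simp
  rw [h1, h2] at hsum
  calc (m:ℝ) + 1/2 = (m:ℝ) * 1 + 1 * (1/2) := by ring
    _ ≤ welfare (Xp n m) k 0 := hsum

/-- welfare of `Xp` at `1` when `m + 1 + k ≤ n` -/
lemma Xw_one_big {n m k : ℕ} (hbig : m + 1 + k ≤ n) :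
    (k : ℝ) ≤ welfare (Xp n m) k 1 := by
  have key : ∀ i : Fin n,
      (if m + 1 ≤ i.val ∧ i.val < m + 1 + k then (1:ℝ) else 0) ≤ util (Xp n m) 1 k i := by
    intro i
    split_ifs with h
    · have hserved : served (Xp n m) 1 k i := by
        apply served_of_bound (a := m + 1) (b := i.val) (le_of_lt i.isLt) (by omega)
        intro j hj
        have hdi : |((1:I) : ℝ) - Xp n m i| = 0 := by
          rw [Xp_dist_one i, if_neg (by omega), if_neg (by omega)]
        rcases hj with hj | hj
        · exfalso
          rw [hdi] at hj
          exact absurd hj (not_lt.2 (abs_nonneg _))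
        · obtain ⟨hj1, hj2⟩ := hj
          rw [hdi, Xp_dist_one j] at hj1
          rw [Fin.lt_def] at hj2
          constructor
          · by_contra hc
            push_neg at hc
            split_ifs at hj1 with h1 h2 <;> first | linarith | omega
          · exact hj2
      rw [util_served hserved, Xp_dist_one i, if_neg (by omega), if_neg (by omega)]
      norm_num
    · exact util_nonneg _ _ _ _
  have hsum := Finset.sum_le_sum (fun i (_ : i ∈ Finset.univ) => key i)
  rw [sum_indicator _ _ (m+1) (m+1+k) (by omega) (fun _ => Iff.rfl)] at hsum
  have h1 : ((m + 1 + k - (m+1) : ℕ) : ℝ) = k := by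
    congr 1
    omega
  rw [h1, mul_one] at hsum
  exact hsum

/-- welfare of `Xp` at `1` when `n < m + 1 + k` -/
lemma Xw_one_small {n m k : ℕ} (hm : m < n) (hsmall : n < m + 1 + k) :
    ((n : ℝ) - (m + 1)) + 1/2 ≤ welfare (Xp n m) k 1 := by
  have key : ∀ i : Fin n,
      (if m + 1 ≤ i.val ∧ i.val < n then (1:ℝ) else 0)
        + (if m ≤ i.val ∧ i.val < m + 1 then (1/2 : ℝ) else 0) ≤ util (Xp n m) 1 k i := by
    intro i
    rcases lt_trichotomy i.val m with h | h | h
    · rw [if_neg (by omega), if_neg (by omega)]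
      simpa using util_nonneg (Xp n m) 1 k i
    · -- lone agent
      rw [if_neg (by omega), if_pos (by omega)]
      have hserved : served (Xp n m) 1 k i := by
        apply served_of_bound (a := m + 1) (b := n) (le_refl n) (by omega)
        intro j hj
        have hdi : |((1:I) : ℝ) - Xp n m i| = 1/2 := by
          rw [Xp_dist_one i, if_neg (by omega), if_pos h]
        rcases hj with hj | hj
        · rw [hdi, Xp_dist_one j] at hj
          constructor
          · by_contra hc
            push_neg at hc
            split_ifs at hj with h1 h2 <;> first | linarith | omega
          · exact j.isLt
        · exfalso
          rw [hdi, Xp_dist_one j] at hj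
          obtain ⟨hj1, hj2⟩ := hj
          rw [Fin.lt_def] at hj2
          split_ifs at hj1 with h1 h2 <;> first | linarith | omega
      rw [util_served hserved, Xp_dist_one i, if_neg (by omega), if_pos h]
      norm_num
    · rw [if_pos (by omega), if_neg (by omega)]
      have hserved : served (Xp n m) 1 k i := by
        apply served_of_bound (a := m + 1) (b := i.val) (le_of_lt i.isLt) (by omega)
        intro j hj
        have hdi : |((1:I) : ℝ) - Xp n m i| = 0 := by
          rw [Xp_dist_one i, if_neg (by omega), if_neg (by omega)]
        rcases hj with hj | hj
        · exfalso
          rw [hdi] at hj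
          exact absurd hj (not_lt.2 (abs_nonneg _))
        · obtain ⟨hj1, hj2⟩ := hj
          rw [hdi, Xp_dist_one j] at hj1
          rw [Fin.lt_def] at hj2
          constructor
          · by_contra hc
            push_neg at hc
            split_ifs at hj1 with h1 h2 <;> first | linarith | omega
          · exact hj2
      rw [util_served hserved, Xp_dist_one i, if_neg (by omega), if_neg (by omega)]
      norm_num
  have hsum := Finset.sum_le_sum (fun i (_ : i ∈ Finset.univ) => key i)
  rw [Finset.sum_add_distrib,
    sum_indicator _ _ (m+1) n (le_refl n) (fun _ => Iff.rfl),
    sum_indicator _ _ m (m+1) (by omega) (fun _ => Iff.rfl)] at hsum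
  have h1 : ((n - (m+1) : ℕ) : ℝ) = (n : ℝ) - (m + 1) := by
    rw [Nat.cast_sub (by omega)]
    push_cast
    ring
  have h2 : ((m + 1 - m : ℕ) : ℝ) = 1 := by simp
  rw [h1, h2] at hsum
  calc (n:ℝ) - (m+1) + 1/2 = ((n:ℝ) - (m+1)) * 1 + 1 * (1/2) := by ring
    _ ≤ welfare (Xp n m) k 1 := hsum

end LB

namespace LB

lemma Xw_upper {n m k : ℕ} (hm : m < n) (hk : 1 ≤ k) {s : I} (hs : (s : ℝ) = 1/2) :
    welfare (Xp n m) k s ≤ ((k : ℝ) + 1) / 2 := by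
  classical
  set lone : Fin n := ⟨m, hm⟩ with hlone
  have hXlone : (lone : Fin n).val = m := rfl
  -- split off the lone agent
  have hsplit : welfare (Xp n m) k s
      = util (Xp n m) s k lone + ∑ i ∈ Finset.univ.erase lone, util (Xp n m) s k i := by
    rw [welfare, ← Finset.add_sum_erase _ _ (Finset.mem_univ lone)]
  -- bound each non-lone utility
  have hpt : ∀ i ∈ Finset.univ.erase lone,
      util (Xp n m) s k i ≤ (if served (Xp n m) s k i then (1/2 : ℝ) else 0) := by
    intro i hi
    have hne : i.val ≠ m := by
      intro hc
      exact (Finset.mem_erase.1 hi).1 (Fin.ext hc)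
    unfold util
    split_ifs with h
    · rw [Xp_dist_half hs i, if_neg hne]
      norm_num
    · exact le_refl _
  -- the served non-lone agents number at most k - 1
  have hcard : ((Finset.univ.erase lone).filter (fun i => served (Xp n m) s k i)).card ≤ k - 1 := by
    have := Finset.card_le_card_of_injOn
      (s := (Finset.univ.erase lone).filter (fun i => served (Xp n m) s k i))
      (f := fun i : Fin n => if i.val < m then i.val + 1 else i.val)
      (t := Finset.Ico 1 k) ?hmaps ?hinj
    · rwa [Nat.card_Ico] at this
    case hmaps =>
      intro i hi
      simp only [Finset.mem_coe, Finset.mem_filter, Finset.mem_erase] at hi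
      obtain ⟨⟨hine, -⟩, hserved⟩ := hi
      have hne : i.val ≠ m := fun hc => hine (Fin.ext hc)
      have hdi : |(s:ℝ) - Xp n m i| = 1/2 := by rw [Xp_dist_half hs i, if_neg hne]
      by_cases hlt : i.val < m
      · -- bound: insert lone {j | j < i} inside the priority set
        have hsub : insert lone {j : Fin n | j.val < i.val} ⊆ {j | prio (Xp n m) s j i} := by
          intro j hj
          rcases Set.mem_insert_iff.1 hj with rfl | hj
          · left
            rw [Xp_dist_half hs lone, if_pos hXlone, hdi]
            norm_num
          · right
            have hjm : j.val < m := lt_trans hj hlt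
            constructor
            · rw [Xp_dist_half hs j, if_neg (by omega), hdi]
            · rw [Fin.lt_def]; exact hj
        have hins : (insert lone {j : Fin n | j.val < i.val}).ncard = i.val + 1 := by
          rw [Set.ncard_insert_of_notMem (by simp [hXlone]; omega) (Set.toFinite _),
            ncard_eq (fun j : Fin n => j.val < i.val) 0 i.val (le_of_lt i.isLt)
              (fun j => by omega)]
          omega
        have hlt2 : i.val + 1 < k := by
          have := ncard_lt_of_served hsub hserved
          rwa [hins] at this
        simp only [Finset.mem_coe, Finset.mem_Ico, if_pos hlt]
        omega
      · have hgt : m < i.val := by omega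
        have hsub : {j : Fin n | j.val < i.val} ⊆ {j | prio (Xp n m) s j i} := by
          intro j hj
          by_cases hjm : j.val = m
          · left
            rw [Xp_dist_half hs j, if_pos hjm, hdi]
            norm_num
          · right
            constructor
            · rw [Xp_dist_half hs j, if_neg hjm, hdi]
            · rw [Fin.lt_def]; exact hj
        have hlt2 : i.val < k := by
          have := ncard_lt_of_served hsub hserved
          rwa [ncard_eq (fun j : Fin n => j.val < i.val) 0 i.val (le_of_lt i.isLt)
            (fun j => by omega)] at this
        simp only [Finset.mem_coe, Finset.mem_Ico, if_neg hlt]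
        omega
    case hinj =>
      intro a ha b hb hab
      simp only [Finset.coe_filter, Set.mem_setOf_eq, Finset.mem_erase] at ha hb
      have hanem : a.val ≠ m := fun hc => ha.1.1 (Fin.ext hc)
      have hbnem : b.val ≠ m := fun hc => hb.1.1 (Fin.ext hc)
      simp only at hab
      apply Fin.ext
      split_ifs at hab <;> omega
  -- combine
  have hsum2 : ∑ i ∈ Finset.univ.erase lone, (if served (Xp n m) s k i then (1/2:ℝ) else 0)
      = (((Finset.univ.erase lone).filter (fun i => served (Xp n m) s k i)).card : ℝ) * (1/2) := by
    rw [Finset.sum_ite, Finset.sum_const_zero, add_zero, Finset.sum_const, nsmul_eq_mul]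
  have hkcast : (((Finset.univ.erase lone).filter (fun i => served (Xp n m) s k i)).card : ℝ)
      ≤ (k : ℝ) - 1 := by
    have h1 : ((k - 1 : ℕ) : ℝ) = (k : ℝ) - 1 := by
      rw [Nat.cast_sub hk]; norm_num
    calc (((Finset.univ.erase lone).filter (fun i => served (Xp n m) s k i)).card : ℝ)
        ≤ ((k - 1 : ℕ) : ℝ) := Nat.cast_le.2 hcard
      _ = (k : ℝ) - 1 := h1
  calc welfare (Xp n m) k s
      = util (Xp n m) s k lone + ∑ i ∈ Finset.univ.erase lone, util (Xp n m) s k i := hsplit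
    _ ≤ 1 + ∑ i ∈ Finset.univ.erase lone, (if served (Xp n m) s k i then (1/2:ℝ) else 0) :=
        add_le_add (util_le_one _ _ _ _) (Finset.sum_le_sum hpt)
    _ ≤ 1 + ((k:ℝ) - 1) * (1/2) := by
        rw [hsum2]
        nlinarith [hkcast]
    _ = ((k:ℝ) + 1) / 2 := by ring

end LB

set_option maxHeartbeats 1000000 in
theorem DIC_lower_bound_large_k (n k : ℕ) (hn : 2 ≤ n)
    (hk1 : n < 2 * k)  -- i.e. `⌈(n-1)/2⌉ < k`
    (hk2 : k ≤ n) (hratio : (1 : ℝ) < ((n : ℝ) - 1) / ((k : ℝ) + 1))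
    (M : (Fin n → I) → I) (hM : Uncompromising M) :
    ∀ ε : ℝ, 0 < ε →
      ∃ x : Fin n → I,
        (((n : ℝ) - 1) / ((k : ℝ) + 1) - ε) * welfare x k (M x) < optWelfare x k := by
  intro ε hε
  have hkpos : 2 ≤ k := by omega
  have hkR : (0:ℝ) < k := by positivity
  have hn2k : (n : ℝ) < 2 * k := by exact_mod_cast hk1
  set R := ((n : ℝ) - 1) / ((k : ℝ) + 1) with hRdef
  have hkone : (0:ℝ) < (k:ℝ) + 1 := by positivity
  have hRk : R * ((k:ℝ) + 1) = (n:ℝ) - 1 := div_mul_cancel₀ _ (ne_of_gt hkone)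
  have hR1 : 1 < R := hratio
  have hR2 : R < 2 := by
    rw [hRdef, div_lt_iff₀ hkone]
    linarith
  by_cases hb' : (1/2 : ℝ) < (M (fun _ : Fin n => (1:I)) : ℝ)
  · by_cases ha' : ((M (fun _ : Fin n => (0:I)) : ℝ)) < 1/2
    · -- main case
      have hex : ∃ j : ℕ, (M (fun i : Fin n => if (i:ℕ) < j then (0:I) else (1:I)) : ℝ) ≤ 1/2 := by
        refine ⟨n, ?_⟩
        have hfe : (fun i : Fin n => if (i:ℕ) < n then (0:I) else (1:I)) = (fun _ : Fin n => (0:I)) :=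
          funext fun i => if_pos i.isLt
        rw [hfe]
        linarith
      set m0 := Nat.find hex with hm0def
      have h0 : (M (fun i : Fin n => if (i:ℕ) < m0 then (0:I) else (1:I)) : ℝ) ≤ 1/2 :=
        Nat.find_spec hex
      have hm0n : m0 ≤ n := Nat.find_min' hex (by
        have hfe : (fun i : Fin n => if (i:ℕ) < n then (0:I) else (1:I)) = (fun _ : Fin n => (0:I)) :=
          funext fun i => if_pos i.isLt
        rw [hfe]; linarith)
      have hm0pos : 1 ≤ m0 := by
        rcases Nat.eq_zero_or_pos m0 with h | h
        · exfalso
          rw [h] at h0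
          have hfe : (fun i : Fin n => if (i:ℕ) < 0 then (0:I) else (1:I)) = (fun _ : Fin n => (1:I)) :=
            funext fun i => if_neg (by omega)
          rw [hfe] at h0
          linarith
        · exact h
      have hPm : ¬ ((M (fun i : Fin n => if (i:ℕ) < m0 - 1 then (0:I) else (1:I)) : ℝ) ≤ 1/2) :=
        Nat.find_min hex (by omega)
      push_neg at hPm
      have hmn : m0 - 1 < n := by omega
      set m := m0 - 1 with hmdef
      set lone : Fin n := ⟨m, hmn⟩ with hlonedef
      have hXlone : ((LB.Xp n m lone : ℝ)) = 1/2 := by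
        rw [LB.Xp_coe]
        have : (lone : Fin n).val = m := rfl
        rw [this, if_neg (by omega), if_pos rfl]
      rcases lt_trichotomy ((M (LB.Xp n m) : ℝ)) (1/2) with hd | hd | hd
      · exfalso
        have hupd : Function.update (LB.Xp n m) lone (1:I)
            = (fun i : Fin n => if (i:ℕ) < m then (0:I) else (1:I)) := by
          funext i
          by_cases hi : i = lone
          · subst hi
            rw [Function.update_self]
            have hv : ((lone : Fin n) : ℕ) = m := rfl
            rw [if_neg (by omega)]
          · rw [Function.update_of_ne hi]
            have hne : (i:ℕ) ≠ m := fun hc => hi (Fin.ext hc)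
            unfold LB.Xp
            by_cases h2 : (i:ℕ) < m
            · rw [if_pos h2, if_pos h2]
            · rw [if_neg h2, if_neg hne, if_neg h2]
        have h1 := (hM (LB.Xp n m) lone).1 (by rw [hXlone]; exact hd) (1:I)
          (by rw [Set.Icc.coe_one]; exact (M (LB.Xp n m)).2.2)
        rw [hupd] at h1
        rw [h1] at hPm
        linarith
      · -- M places the facility at 1/2 : the bad profile
        refine ⟨LB.Xp n m, ?_⟩
        have hWup : welfare (LB.Xp n m) k (M (LB.Xp n m)) ≤ ((k:ℝ)+1)/2 :=
          LB.Xw_upper hmn (by omega) hd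
        have hW0 : 0 ≤ welfare (LB.Xp n m) k (M (LB.Xp n m)) := LB.welfare_nonneg _ _ _
        have hOpt : ((n:ℝ)-1)/2 < optWelfare (LB.Xp n m) k := by
          rcases le_or_gt k m with hkm | hmk
          · have hw := LB.Xw_zero_big (k := k) hmn hkm
            have ho := LB.opt_ge (LB.Xp n m) k 0
            linarith
          · rcases le_or_gt (m+1+k) n with hbig | hsmall
            · have hw := LB.Xw_one_big (n := n) (m := m) (k := k) hbig
              have ho := LB.opt_ge (LB.Xp n m) k 1
              linarith
            · rcases le_or_gt n (2*m+1) with hc | hc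
              · have hw := LB.Xw_zero_small (k := k) hmn hmk
                have ho := LB.opt_ge (LB.Xp n m) k 0
                have hcc : (n:ℝ) ≤ 2*m+1 := by exact_mod_cast hc
                linarith
              · have hw := LB.Xw_one_small (k := k) hmn hsmall
                have ho := LB.opt_ge (LB.Xp n m) k 1
                have hcc : 2*(m:ℝ)+1 < n := by exact_mod_cast hc
                linarith
        have hRnn : (0:ℝ) ≤ R := by linarith
        have h1 : (R - ε) * welfare (LB.Xp n m) k (M (LB.Xp n m))
            ≤ R * welfare (LB.Xp n m) k (M (LB.Xp n m)) := by
          nlinarith [mul_nonneg hε.le hW0]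
        have h2 : R * welfare (LB.Xp n m) k (M (LB.Xp n m)) ≤ R * (((k:ℝ)+1)/2) :=
          mul_le_mul_of_nonneg_left hWup hRnn
        have h3 : R * (((k:ℝ)+1)/2) = ((n:ℝ)-1)/2 := by
          rw [show R * (((k:ℝ)+1)/2) = (R * ((k:ℝ)+1))/2 from by ring, hRk]
        linarith
      · exfalso
        have hupd : Function.update (LB.Xp n m) lone (0:I)
            = (fun i : Fin n => if (i:ℕ) < m0 then (0:I) else (1:I)) := by
          funext i
          by_cases hi : i = lone
          · subst hi
            rw [Function.update_self]
            have hv : ((lone : Fin n) : ℕ) = m := rfl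
            rw [if_pos (by omega)]
          · rw [Function.update_of_ne hi]
            have hne : (i:ℕ) ≠ m := fun hc => hi (Fin.ext hc)
            unfold LB.Xp
            by_cases h2 : (i:ℕ) < m
            · rw [if_pos h2, if_pos (by omega)]
            · rw [if_neg h2, if_neg hne, if_neg (by omega)]
        have h1 := (hM (LB.Xp n m) lone).2 (by rw [hXlone]; exact hd) (0:I)
          (by rw [Set.Icc.coe_zero]; exact (M (LB.Xp n m)).2.1)
        rw [hupd] at h1
        rw [h1] at h0
        linarith
    · -- M (const 0) ≥ 1/2 : use the all-zero profile
      push_neg at ha'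
      refine ⟨fun _ : Fin n => (0:I), ?_⟩
      set a := (M (fun _ : Fin n => (0:I)) : ℝ) with hadef
      have ha1 : a ≤ 1 := (M (fun _ : Fin n => (0:I))).2.2
      have hW : welfare (fun _ : Fin n => (0:I)) k (M (fun _ : Fin n => (0:I)))
          = k * (1 - a) := by
        rw [LB.welfare_const hk2]
        rw [Set.Icc.coe_zero, sub_zero, abs_of_nonneg (M (fun _ : Fin n => (0:I))).2.1]
      have hOpt : (k:ℝ) ≤ optWelfare (fun _ : Fin n => (0:I)) k := by
        have hw : welfare (fun _ : Fin n => (0:I)) k 0 = k * (1 - 0) := by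
          rw [LB.welfare_const hk2]
          norm_num
        have ho := LB.opt_ge (fun _ : Fin n => (0:I)) k 0
        rw [hw] at ho
        linarith
      rw [hW]
      rcases le_or_gt (R - ε) 0 with hre | hre
      · have : (R - ε) * ((k:ℝ) * (1 - a)) ≤ 0 :=
          mul_nonpos_of_nonpos_of_nonneg hre (by nlinarith)
        linarith
      · have hb1 : (k:ℝ) * (1 - a) ≤ (k:ℝ) * (1/2) := by nlinarith
        have : (R - ε) * ((k:ℝ) * (1 - a)) ≤ (R - ε) * ((k:ℝ) * (1/2)) :=
          mul_le_mul_of_nonneg_left hb1 hre.le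
        nlinarith
  · -- M (const 1) ≤ 1/2 : use the all-one profile
    push_neg at hb'
    refine ⟨fun _ : Fin n => (1:I), ?_⟩
    set b := (M (fun _ : Fin n => (1:I)) : ℝ) with hbdef
    have hb0 : 0 ≤ b := (M (fun _ : Fin n => (1:I))).2.1
    have hW : welfare (fun _ : Fin n => (1:I)) k (M (fun _ : Fin n => (1:I)))
        = k * b := by
      rw [LB.welfare_const hk2]
      rw [Set.Icc.coe_one]
      have : |b - 1| = 1 - b := by
        rw [abs_of_nonpos (by linarith)]
        ring
      rw [this]
      ring
    have hOpt : (k:ℝ) ≤ optWelfare (fun _ : Fin n => (1:I)) k := by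
      have hw : welfare (fun _ : Fin n => (1:I)) k 1 = k * (1 - 0) := by
        rw [LB.welfare_const hk2]
        norm_num
      have ho := LB.opt_ge (fun _ : Fin n => (1:I)) k 1
      rw [hw] at ho
      linarith
    rw [hW]
    rcases le_or_gt (R - ε) 0 with hre | hre
    · have : (R - ε) * ((k:ℝ) * b) ≤ 0 :=
        mul_nonpos_of_nonpos_of_nonneg hre (mul_nonneg hkR.le hb0)
      linarith
    · have hb1 : (k:ℝ) * b ≤ (k:ℝ) * (1/2) := by nlinarith
      have : (R - ε) * ((k:ℝ) * b) ≤ (R - ε) * ((k:ℝ) * (1/2)) :=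
        mul_le_mul_of_nonneg_left hb1 hre.le
      nlinarith
end
end

section
/- For n ≥ 5 and capacity k > ⌊(n+1)/2⌋, the median mechanism's welfare satisfies Π_M(x,k) ≥ Π*(x,k) − (n+1−k) for every profile x, and since Π*(x,k) ≥ k/2, the median mechanism is a (1 + 2(n+1−k)/(3k−2n−2))-approximation when 3k − 2n − 2 > 0. -/
open scoped Classical
open unitInterval

noncomputable section

/-! ### Auxiliary lemmas -/

lemma prio_trans {n : ℕ} {x : Fin n → I} {s : I} {i j t : Fin n}
    (h1 : prio x s i j) (h2 : prio x s j t) : prio x s i t := by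
  rcases h1 with h1 | ⟨e1, l1⟩ <;> rcases h2 with h2 | ⟨e2, l2⟩
  · exact Or.inl (h1.trans h2)
  · exact Or.inl (e2 ▸ h1)
  · exact Or.inl (e1 ▸ h2)
  · exact Or.inr ⟨e1.trans e2, l1.trans l2⟩

lemma prio_total {n : ℕ} {x : Fin n → I} {s : I} {i j : Fin n} (h : i ≠ j) :
    prio x s i j ∨ prio x s j i := by
  rcases lt_trichotomy (|(s : ℝ) - x i|) (|(s : ℝ) - x j|) with h1 | h1 | h1
  · exact Or.inl (Or.inl h1)
  · rcases h.lt_or_gt with h2 | h2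
    · exact Or.inl (Or.inr ⟨h1, h2⟩)
    · exact Or.inr (Or.inr ⟨h1.symm, h2⟩)
  · exact Or.inr (Or.inl h1)

lemma served_iff {n : ℕ} (x : Fin n → I) (s : I) (k : ℕ) (i : Fin n) :
    served x s k i ↔ (Finset.univ.filter (fun j => prio x s j i)).card < k := by
  have h : {j : Fin n | prio x s j i} = ↑(Finset.univ.filter (fun j => prio x s j i)) := by
    ext j; simp
  rw [served, h, Set.ncard_coe_finset]

/-- The set of served agents has exactly `k` elements when `k ≤ n`. -/
lemma card_served {n : ℕ} (x : Fin n → I) (s : I) (k : ℕ) (hk : k ≤ n) :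
    (Finset.univ.filter (fun i => served x s k i)).card = k := by
  classical
  set F : Fin n → Finset (Fin n) := fun i => Finset.univ.filter (fun j => prio x s j i) with hF
  have hmono : ∀ i j, prio x s i j → (F i).card < (F j).card := by
    intro i j hij
    apply Finset.card_lt_card
    constructor
    · intro t ht
      simp only [hF, Finset.mem_filter, Finset.mem_univ, true_and] at ht ⊢
      exact prio_trans ht hij
    · intro hsub
      have : i ∈ F i := hsub (by simp [hF, hij])
      simp only [hF, Finset.mem_filter, Finset.mem_univ, true_and] at this
      exact prio_irrefl x s i this
  have hlt : ∀ i, (F i).card < n := by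
    intro i
    have h1 : F i ≠ Finset.univ := by
      intro h
      have : i ∈ F i := h ▸ Finset.mem_univ i
      simp only [hF, Finset.mem_filter, Finset.mem_univ, true_and] at this
      exact prio_irrefl x s i this
    have := Finset.card_lt_card (h1.lt_of_le (Finset.subset_univ _) : F i ⊂ Finset.univ)
    simpa using this
  set g : Fin n → Fin n := fun i => ⟨(F i).card, hlt i⟩ with hg
  have hinj : Function.Injective g := by
    intro i j h
    by_contra hne
    have hcard : (F i).card = (F j).card := congrArg Fin.val h
    rcases prio_total (x := x) (s := s) hne with hp | hp
    · exact absurd hcard (hmono i j hp).ne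
    · exact absurd hcard.symm (hmono j i hp).ne
  have hsurj : Function.Surjective g := Finite.surjective_of_injective hinj
  have e1 : (Finset.univ.filter (fun i => served x s k i)) =
      (Finset.univ.filter (fun i => (g i : ℕ) < k)) := by
    ext i; simp [served_iff, hg, hF]
  rw [e1]
  have e2 : (Finset.univ.filter (fun i => (g i : ℕ) < k)).card =
      (Finset.univ.filter (fun t : Fin n => (t : ℕ) < k)).card := by
    apply Finset.card_bij (fun i _ => g i)
    · intro a ha; simp only [Finset.mem_filter, Finset.mem_univ, true_and] at ha ⊢; exact ha
    · intro a _ b _ h; exact hinj h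
    · intro b hb
      obtain ⟨a, rfl⟩ := hsurj b
      simp only [Finset.mem_filter, Finset.mem_univ, true_and] at hb
      exact ⟨a, by simpa using hb, rfl⟩
  rw [e2]
  have e3 : (Finset.univ.filter (fun t : Fin n => (t : ℕ) < k)).card = (Finset.range k).card := by
    refine Finset.card_bij
      (fun (t : Fin n) (_ : t ∈ Finset.univ.filter (fun t : Fin n => (t : ℕ) < k)) => (t : ℕ))
      ?_ ?_ ?_
    · intro a ha; simp only [Finset.mem_filter, Finset.mem_univ, true_and] at ha
      simpa using ha
    · intro a _ b _ h; exact Fin.val_injective h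
    · intro b hb
      simp only [Finset.mem_range] at hb
      exact ⟨⟨b, lt_of_lt_of_le hb hk⟩, by simpa using hb, rfl⟩
  rw [e3, Finset.card_range]

/-- At least `⌊(n+1)/2⌋` agents lie (weakly) left of the median, and at least
`n - ⌊(n+1)/2⌋ + 1` lie (weakly) right of it. -/
lemma median_counts {n : ℕ} (hn : 1 ≤ n) (x : Fin n → I) :
    (n + 1) / 2 ≤ (Finset.univ.filter (fun i => x i ≤ medianMech n x)).card ∧
    n - (n + 1) / 2 + 1 ≤ (Finset.univ.filter (fun i => medianMech n x ≤ x i)).card := by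
  classical
  set r := (n + 1) / 2 with hr
  set l := ((Finset.univ.val.map x).sort (· ≤ ·)) with hl
  have hlen : l.length = n := by
    rw [hl, Multiset.length_sort]
    simp
  have hsorted : l.Pairwise (· ≤ ·) := Multiset.pairwise_sort _ _
  have hr1 : 1 ≤ r := by omega
  have hrn : r ≤ n := by omega
  have hidx : r - 1 < l.length := by omega
  have hm : medianMech n x = l.get ⟨r - 1, hidx⟩ := by
    rw [medianMech, ← hl, ← hr, List.getD_eq_getElem l 0 hidx]
    simp
  set m := medianMech n x with hmm
  have hcount : ∀ (p : I → Prop), (Finset.univ.filter (fun i => p (x i))).card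
      = l.countP (fun a => decide (p a)) := by
    intro p
    rw [Finset.card_def, Finset.filter_val, ← Multiset.countP_eq_card_filter]
    have e : Multiset.countP (fun i => p (x i)) Finset.univ.val
        = Multiset.countP p (Multiset.map x Finset.univ.val) :=
      (Multiset.countP_eq_card_filter _ _).trans (Multiset.countP_map x Finset.univ.val p).symm
    rw [e]
    have h3 : (Multiset.map x Finset.univ.val) = (l : Multiset I) := (Multiset.sort_eq _ _).symm
    rw [h3, Multiset.coe_countP]
  have hc1 : (Finset.univ.filter (fun i => x i ≤ m)).card
      = l.countP (fun a => decide (a ≤ m)) := hcount (· ≤ m)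
  have hc2 : (Finset.univ.filter (fun i => m ≤ x i)).card
      = l.countP (fun a => decide (m ≤ a)) := hcount (m ≤ ·)
  constructor
  · rw [hc1]
    have hsplit : l.countP (fun a => decide (a ≤ m))
        = (l.take r).countP (fun a => decide (a ≤ m))
          + (l.drop r).countP (fun a => decide (a ≤ m)) := by
      conv_lhs => rw [← List.take_append_drop r l]
      rw [List.countP_append]
    have hall : ∀ a ∈ l.take r, a ≤ m := by
      intro a ha
      obtain ⟨i, hi, rfl⟩ := List.mem_iff_get.mp ha
      have hi' : (i : ℕ) < r := by
        have h := i.isLt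
        simp only [List.length_take, hlen, lt_min_iff] at h
        exact h.1
      have he : (l.take r).get i = l.get ⟨i, by omega⟩ := by
        simp [List.getElem_take]
      rw [he, hm]
      exact hsorted.rel_get_of_le (by simp only [Fin.mk_le_mk]; omega)
    have h4 : (l.take r).countP (fun a => decide (a ≤ m)) = r := by
      have hb : ∀ a ∈ l.take r, (fun a => decide (a ≤ m)) a = true :=
        fun a ha => by simpa using hall a ha
      rw [List.countP_eq_length.mpr hb, List.length_take, hlen]
      omega
    omega
  · rw [hc2]
    have hsplit : l.countP (fun a => decide (m ≤ a))
        = (l.take (r-1)).countP (fun a => decide (m ≤ a))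
          + (l.drop (r-1)).countP (fun a => decide (m ≤ a)) := by
      conv_lhs => rw [← List.take_append_drop (r-1) l]
      rw [List.countP_append]
    have hall : ∀ a ∈ l.drop (r-1), m ≤ a := by
      intro a ha
      obtain ⟨i, hi, rfl⟩ := List.mem_iff_get.mp ha
      have hi' : (i : ℕ) < n - (r - 1) := by
        have := i.isLt
        simpa [List.length_drop, hlen] using this
      have he : (l.drop (r-1)).get i = l.get ⟨r - 1 + i, by omega⟩ := by
        simp [List.getElem_drop]
      rw [he, hm]
      exact hsorted.rel_get_of_le (by simp only [Fin.mk_le_mk]; omega)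
    have h4 : (l.drop (r-1)).countP (fun a => decide (m ≤ a)) = n - (r - 1) := by
      have hb : ∀ a ∈ l.drop (r-1), (fun a => decide (m ≤ a)) a = true :=
        fun a ha => by simpa using hall a ha
      rw [List.countP_eq_length.mpr hb, List.length_drop, hlen]
    omega

/-- The median minimizes the total distance. -/
lemma med_min {n : ℕ} (x : Fin n → I) (m s : I)
    (hA : (n + 1) / 2 ≤ (Finset.univ.filter (fun i => x i ≤ m)).card)
    (hB : n - (n + 1) / 2 + 1 ≤ (Finset.univ.filter (fun i => m ≤ x i)).card) :
    (∑ i, |(m : ℝ) - (x i : ℝ)|) ≤ ∑ i, |(s : ℝ) - (x i : ℝ)| := by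
  classical
  set μ := (m : ℝ) with hμ
  set t := (s : ℝ) with ht
  rcases le_total μ t with h | h
  · set A := Finset.univ.filter (fun i => x i ≤ m) with hA'
    set B := Finset.univ.filter (fun i => ¬ (x i ≤ m)) with hB'
    have hcards : A.card + B.card = n := by
      rw [hA', hB', Finset.card_filter_add_card_filter_not]
      simp
    have hge : B.card ≤ A.card := by omega
    have e1 : ∀ i ∈ A, |μ - (x i : ℝ)| = |t - (x i : ℝ)| - (t - μ) := by
      intro i hi
      have hx : (x i : ℝ) ≤ μ := by
        simp only [hA', Finset.mem_filter, Finset.mem_univ, true_and] at hi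
        exact_mod_cast hi
      rw [abs_of_nonneg (by linarith), abs_of_nonneg (by linarith)]
      ring
    have e2 : ∀ i ∈ B, |μ - (x i : ℝ)| ≤ |t - (x i : ℝ)| + (t - μ) := by
      intro i _
      have h1 := abs_sub_le μ t (x i : ℝ)
      have h2 : |μ - t| = t - μ := by
        rw [abs_of_nonpos (by linarith)]; ring
      linarith
    have s1 : (∑ i ∈ A, |μ - (x i : ℝ)|) = (∑ i ∈ A, |t - (x i : ℝ)|) - A.card * (t - μ) := by
      rw [Finset.sum_congr rfl e1, Finset.sum_sub_distrib, Finset.sum_const, nsmul_eq_mul]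
    have s2 : (∑ i ∈ B, |μ - (x i : ℝ)|) ≤ (∑ i ∈ B, |t - (x i : ℝ)|) + B.card * (t - μ) := by
      calc (∑ i ∈ B, |μ - (x i : ℝ)|) ≤ ∑ i ∈ B, (|t - (x i : ℝ)| + (t - μ)) :=
            Finset.sum_le_sum e2
        _ = (∑ i ∈ B, |t - (x i : ℝ)|) + B.card * (t - μ) := by
            rw [Finset.sum_add_distrib, Finset.sum_const, nsmul_eq_mul]
    have split1 : (∑ i, |μ - (x i : ℝ)|)
        = (∑ i ∈ A, |μ - (x i : ℝ)|) + ∑ i ∈ B, |μ - (x i : ℝ)| :=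
      (Finset.sum_filter_add_sum_filter_not Finset.univ _ _).symm
    have split2 : (∑ i, |t - (x i : ℝ)|)
        = (∑ i ∈ A, |t - (x i : ℝ)|) + ∑ i ∈ B, |t - (x i : ℝ)| :=
      (Finset.sum_filter_add_sum_filter_not Finset.univ _ _).symm
    have hcast : (B.card : ℝ) ≤ A.card := by exact_mod_cast hge
    have hmul := mul_le_mul_of_nonneg_right hcast (by linarith : (0:ℝ) ≤ t - μ)
    linarith
  · set A := Finset.univ.filter (fun i => m ≤ x i) with hA'
    set B := Finset.univ.filter (fun i => ¬ (m ≤ x i)) with hB'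
    have hcards : A.card + B.card = n := by
      rw [hA', hB', Finset.card_filter_add_card_filter_not]
      simp
    have hge : B.card ≤ A.card := by omega
    have e1 : ∀ i ∈ A, |μ - (x i : ℝ)| = |t - (x i : ℝ)| - (μ - t) := by
      intro i hi
      have hx : μ ≤ (x i : ℝ) := by
        simp only [hA', Finset.mem_filter, Finset.mem_univ, true_and] at hi
        exact_mod_cast hi
      rw [abs_of_nonpos (by linarith), abs_of_nonpos (by linarith)]
      ring
    have e2 : ∀ i ∈ B, |μ - (x i : ℝ)| ≤ |t - (x i : ℝ)| + (μ - t) := by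
      intro i _
      have h1 := abs_sub_le μ t (x i : ℝ)
      have h2 : |μ - t| = μ - t := abs_of_nonneg (by linarith)
      linarith
    have s1 : (∑ i ∈ A, |μ - (x i : ℝ)|) = (∑ i ∈ A, |t - (x i : ℝ)|) - A.card * (μ - t) := by
      rw [Finset.sum_congr rfl e1, Finset.sum_sub_distrib, Finset.sum_const, nsmul_eq_mul]
    have s2 : (∑ i ∈ B, |μ - (x i : ℝ)|) ≤ (∑ i ∈ B, |t - (x i : ℝ)|) + B.card * (μ - t) := by
      calc (∑ i ∈ B, |μ - (x i : ℝ)|) ≤ ∑ i ∈ B, (|t - (x i : ℝ)| + (μ - t)) :=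
            Finset.sum_le_sum e2
        _ = (∑ i ∈ B, |t - (x i : ℝ)|) + B.card * (μ - t) := by
            rw [Finset.sum_add_distrib, Finset.sum_const, nsmul_eq_mul]
    have split1 : (∑ i, |μ - (x i : ℝ)|)
        = (∑ i ∈ A, |μ - (x i : ℝ)|) + ∑ i ∈ B, |μ - (x i : ℝ)| :=
      (Finset.sum_filter_add_sum_filter_not Finset.univ _ _).symm
    have split2 : (∑ i, |t - (x i : ℝ)|)
        = (∑ i ∈ A, |t - (x i : ℝ)|) + ∑ i ∈ B, |t - (x i : ℝ)| :=
      (Finset.sum_filter_add_sum_filter_not Finset.univ _ _).symm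
    have hcast : (B.card : ℝ) ≤ A.card := by exact_mod_cast hge
    have hmul := mul_le_mul_of_nonneg_right hcast (by linarith : (0:ℝ) ≤ μ - t)
    linarith

lemma abs_dist_le_one (s a : I) : |(s : ℝ) - (a : ℝ)| ≤ 1 := by
  have h1 := s.2.1; have h2 := s.2.2; have h3 := a.2.1; have h4 := a.2.2
  rw [abs_le]; constructor <;> linarith

lemma welfare_eq_sum_filter {n : ℕ} (x : Fin n → I) (k : ℕ) (s : I) :
    welfare x k s
      = ∑ i ∈ Finset.univ.filter (fun i => served x s k i), (1 - |(s : ℝ) - x i|) := by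
  rw [welfare, Finset.sum_filter]
  apply Finset.sum_congr rfl
  intro i _
  rw [util]

lemma welfare_le_total {n : ℕ} (x : Fin n → I) (k : ℕ) (s : I) :
    welfare x k s ≤ ∑ i, (1 - |(s : ℝ) - x i|) := by
  rw [welfare]
  apply Finset.sum_le_sum
  intro i _
  rw [util]
  split
  · exact le_refl _
  · have := abs_dist_le_one s (x i); linarith

theorem median_welfare_large_k (n k : ℕ) (hn : 5 ≤ n) (hk : k ≤ n)
    (hk2 : (n + 1) / 2 < k)  -- i.e. `k > ⌊(n+1)/2⌋`
    :
    (∀ x : Fin n → I,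
      optWelfare x k - ((n : ℝ) + 1 - (k : ℝ)) ≤ welfare x k (medianMech n x)) ∧
    (∀ x : Fin n → I, (k : ℝ) / 2 ≤ optWelfare x k) ∧
    ((0 : ℝ) < 3 * (k : ℝ) - 2 * (n : ℝ) - 2 →
      ∀ x : Fin n → I,
        optWelfare x k ≤
          (1 + 2 * ((n : ℝ) + 1 - (k : ℝ)) / (3 * (k : ℝ) - 2 * (n : ℝ) - 2)) *
            welfare x k (medianMech n x)) := by
  haveI : Nonempty I := ⟨0⟩
  have hn1 : 1 ≤ n := by omega
  have part1 : ∀ x : Fin n → I,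
      optWelfare x k - ((n : ℝ) + 1 - (k : ℝ)) ≤ welfare x k (medianMech n x) := by
    intro x
    set m := medianMech n x with hm
    obtain ⟨hA, hB⟩ := median_counts hn1 x
    have hkey : ∀ s : I, welfare x k s ≤ welfare x k m + ((n:ℝ) + 1 - k) := by
      intro s
      have h1 : welfare x k s ≤ ∑ i, (1 - |(s:ℝ) - x i|) := welfare_le_total x k s
      have h2 : (∑ i, (1 - |(s:ℝ) - (x i : ℝ)|)) = n - ∑ i, |(s:ℝ) - (x i : ℝ)| := by
        rw [Finset.sum_sub_distrib, Finset.sum_const, Finset.card_univ, Fintype.card_fin,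
          nsmul_eq_mul, mul_one]
      have h3 := med_min x m s hA hB
      have h4 : (∑ i, (1 - |(m:ℝ) - (x i : ℝ)|)) - ((n:ℝ) - k) ≤ welfare x k m := by
        have hsplit : (∑ i, (1 - |(m:ℝ) - (x i : ℝ)|))
            = (∑ i ∈ Finset.univ.filter (fun i => served x m k i), (1 - |(m:ℝ) - (x i : ℝ)|))
              + ∑ i ∈ Finset.univ.filter (fun i => ¬ served x m k i),
                  (1 - |(m:ℝ) - (x i : ℝ)|) :=
          (Finset.sum_filter_add_sum_filter_not Finset.univ _ _).symm
        have hcards : (Finset.univ.filter (fun i => served x m k i)).card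
            + (Finset.univ.filter (fun i => ¬ served x m k i)).card = n := by
          rw [Finset.card_filter_add_card_filter_not]; simp
        have hserved := card_served x m k hk
        have hnk : (Finset.univ.filter (fun i => ¬ served x m k i)).card = n - k := by omega
        have hbound : (∑ i ∈ Finset.univ.filter (fun i => ¬ served x m k i),
            (1 - |(m:ℝ) - (x i : ℝ)|)) ≤ ((n : ℝ) - k) := by
          calc (∑ i ∈ Finset.univ.filter (fun i => ¬ served x m k i),
                (1 - |(m:ℝ) - (x i : ℝ)|))
              ≤ ∑ _i ∈ Finset.univ.filter (fun i => ¬ served x m k i), (1:ℝ) := by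
                apply Finset.sum_le_sum; intro i _
                have := abs_nonneg ((m:ℝ) - (x i : ℝ)); linarith
            _ = ((n - k : ℕ) : ℝ) := by rw [Finset.sum_const, hnk, nsmul_eq_mul, mul_one]
            _ ≤ (n:ℝ) - k := by rw [Nat.cast_sub hk]
        rw [welfare_eq_sum_filter]
        linarith
      have h5 : (∑ i, (1 - |(m:ℝ) - (x i : ℝ)|)) = n - ∑ i, |(m:ℝ) - (x i : ℝ)| := by
        rw [Finset.sum_sub_distrib, Finset.sum_const, Finset.card_univ, Fintype.card_fin,
          nsmul_eq_mul, mul_one]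
      linarith
    have : optWelfare x k ≤ welfare x k m + ((n:ℝ)+1-k) := ciSup_le hkey
    linarith
  have part2 : ∀ x : Fin n → I, (k : ℝ) / 2 ≤ optWelfare x k := by
    intro x
    have hbdd : BddAbove (Set.range (welfare x k)) := by
      refine ⟨(n:ℝ), ?_⟩
      rintro _ ⟨s, rfl⟩
      have h1 : welfare x k s
          ≤ ((Finset.univ.filter (fun i => served x s k i)).card : ℝ) := by
        rw [welfare_eq_sum_filter]
        calc (∑ i ∈ Finset.univ.filter (fun i => served x s k i), (1 - |(s : ℝ) - (x i : ℝ)|))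
            ≤ ∑ _i ∈ Finset.univ.filter (fun i => served x s k i), (1:ℝ) := by
              apply Finset.sum_le_sum; intro i _
              have := abs_nonneg ((s:ℝ) - (x i : ℝ)); linarith
          _ = _ := by rw [Finset.sum_const, nsmul_eq_mul, mul_one]
      rw [card_served x s k hk] at h1
      have : (k:ℝ) ≤ n := by exact_mod_cast hk
      linarith
    set half : I := ⟨1/2, by norm_num, by norm_num⟩ with hhalf
    have hhv : (half : ℝ) = 1/2 := rfl
    have h12 : (k:ℝ)/2 ≤ welfare x k half := by
      rw [welfare_eq_sum_filter]
      calc (k:ℝ)/2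
          = ((Finset.univ.filter (fun i => served x half k i)).card : ℝ) * (1/2 : ℝ) := by
            rw [card_served x half k hk]; ring
        _ = ∑ _i ∈ Finset.univ.filter (fun i => served x half k i), (1/2 : ℝ) := by
            rw [Finset.sum_const, nsmul_eq_mul]
        _ ≤ ∑ i ∈ Finset.univ.filter (fun i => served x half k i),
              (1 - |(half : ℝ) - (x i : ℝ)|) := by
            apply Finset.sum_le_sum
            intro i _
            have h3 := (x i).2.1; have h4 := (x i).2.2
            have habs : |(half:ℝ) - (x i : ℝ)| ≤ 1/2 := by
              rw [hhv, abs_le]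
              constructor <;> linarith
            linarith
    exact le_trans h12 (le_ciSup hbdd half)
  refine ⟨part1, part2, ?_⟩
  intro hc x
  have h1 := part1 x
  have h2 := part2 x
  set W := welfare x k (medianMech n x) with hW'
  set P := optWelfare x k with hP'
  set c := 3 * (k:ℝ) - 2 * n - 2 with hc'
  set D := (n:ℝ) + 1 - k with hD'
  have hkn : (k:ℝ) ≤ n := by exact_mod_cast hk
  have hD0 : 0 ≤ D := by rw [hD']; linarith
  have hWc : c / 2 ≤ W := by
    rw [hc']
    linarith
  have hcne : c ≠ 0 := ne_of_gt hc
  have hkey : 2 * D / c * (c / 2) = D := by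
    field_simp
  have hnn : 0 ≤ 2 * D / c := by positivity
  have hmul := mul_le_mul_of_nonneg_left hWc hnn
  have hexp : (1 + 2 * D / c) * W = W + 2 * D / c * W := by ring
  rw [hexp]
  linarith [hkey ▸ hmul]
end
end

section
/- For capacity k < n (n ≥ 2), no location-allocation mechanism that is allocation-anonymous is DIC: there always exist an agent, a true profile, and a misreport giving the agent strictly higher utility. -/
open scoped Classical
open unitInterval

noncomputable section

/-- Utility under a location-allocation outcome `(s, A)`: agent `i` gets `1 - |s - x_i|`
if `i` is allocated to the facility, and `0` otherwise. -/
def uA {n : ℕ} (x : Fin n → I) (p : I × Finset (Fin n)) (i : Fin n) : ℝ :=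
  if i ∈ p.2 then 1 - |(p.1 : ℝ) - x i| else 0

theorem no_anonymous_DIC_location_allocation (n k : ℕ) (hk1 : 1 ≤ k) (hkn : k < n)
    (M : (Fin n → I) → I × Finset (Fin n))
    (hcard : ∀ x, 0 < (M x).2.card ∧ (M x).2.card ≤ k)
    (hanon : ∀ (i j : Fin n), i ≠ j → ∀ x : Fin n → I,
      (∀ l, l ≠ i → x i ≠ x l) →
      (i ∈ (M x).2 ↔ j ∈ (M (x ∘ Equiv.swap i j)).2)) :
    ¬ (∀ (i : Fin n) (x y : Fin n → I) (x' : I),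
        uA x (M (Function.update y i x')) i ≤ uA x (M (Function.update y i (x i))) i) := by
  intro hDIC
  set c : I := ⟨1/2, by constructor <;> norm_num⟩ with hc
  set z : Fin n → I := fun _ => c with hz
  -- there is an agent unserved at the all-½ profile
  obtain ⟨i, hi⟩ : ∃ i, i ∉ (M z).2 := by
    by_contra h
    push_neg at h
    have hsub : (Finset.univ : Finset (Fin n)) ⊆ (M z).2 := fun j _ => h j
    have hle := Finset.card_le_card hsub
    rw [Finset.card_univ, Fintype.card_fin] at hle
    have := (hcard z).2
    omega
  -- agent i (truly at ½) can never be served by any misreport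
  have key : ∀ x' : I, i ∉ (M (Function.update z i x')).2 := by
    intro x' hmem
    have h := hDIC i z z x'
    rw [Function.update_eq_self] at h
    have hr : uA z (M z) i = 0 := by simp [uA, hi]
    rw [hr, uA, if_pos hmem] at h
    set s := (M (Function.update z i x')).1 with hs
    have h0 : (0:ℝ) ≤ (s:ℝ) := s.2.1
    have h1 : (s:ℝ) ≤ 1 := s.2.2
    have hzi : ((z i : I) : ℝ) = 1/2 := rfl
    have habs : |(s:ℝ) - z i| ≤ 1/2 := by
      rw [hzi, abs_le]; constructor <;> linarith
    linarith
  -- helper: swapping i and j in the perturbed profile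
  have swap_eq : ∀ (a : I) (j : Fin n), j ≠ i →
      (Function.update z i a) ∘ Equiv.swap i j = Function.update z j a := by
    intro a j hji
    funext l
    simp only [Function.comp]
    rcases eq_or_ne l i with rfl | hli
    · rw [Equiv.swap_apply_left, Function.update_of_ne hji,
        Function.update_of_ne (Ne.symm hji)]
    · rcases eq_or_ne l j with rfl | hlj
      · rw [Equiv.swap_apply_right, Function.update_self, Function.update_self]
      · rw [Equiv.swap_apply_of_ne_of_ne hli hlj, Function.update_of_ne hli,
          Function.update_of_ne hlj]
  -- extreme reports are never served, for every agent
  have notz : ∀ (a : I), ((a : ℝ) ≠ 1/2) → ∀ j, j ∉ (M (Function.update z j a)).2 := by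
    intro a ha j
    rcases eq_or_ne j i with rfl | hji
    · exact key a
    · have hne : ∀ l, l ≠ i →
          (Function.update z i a) i ≠ (Function.update z i a) l := by
        intro l hl
        rw [Function.update_self, Function.update_of_ne hl]
        intro h
        exact ha (congrArg Subtype.val h)
      have h := hanon i j (Ne.symm hji) (Function.update z i a) hne
      rw [swap_eq a j hji] at h
      exact fun hm => key a (h.mpr hm)
  -- if agent j truly at `a` is unserved at its true profile, DIC bounds utility at z
  have step : ∀ (j : Fin n) (a : I), j ∉ (M (Function.update z j a)).2 →
      j ∈ (M z).2 → 1 - |((M z).1 : ℝ) - (a:ℝ)| ≤ 0 := by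
    intro j a hnot hmem
    have h := hDIC j (Function.update z j a) z c
    rw [Function.update_self] at h
    rw [show Function.update z j c = z from Function.update_eq_self j z] at h
    rw [show uA (Function.update z j a) (M (Function.update z j a)) j = 0 from by
      simp [uA, hnot]] at h
    rw [uA, if_pos hmem, Function.update_self] at h
    exact h
  obtain ⟨j, hj⟩ := Finset.card_pos.mp (hcard z).1
  have h0 := step j 0 (notz 0 (by norm_num) j) hj
  have h1 := step j 1 (notz 1 (by norm_num) j) hj
  have hs0 : (0:ℝ) ≤ ((M z).1 : ℝ) := (M z).1.2.1
  have hs1 : ((M z).1 : ℝ) ≤ 1 := (M z).1.2.2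
  rw [show ((0:I):ℝ) = 0 from rfl] at h0
  rw [show ((1:I):ℝ) = 1 from rfl] at h1
  rw [abs_of_nonneg (by linarith)] at h0
  rw [abs_of_nonpos (by linarith)] at h1
  linarith
end
end
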